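/- Let G = (A, Ω) be a Müller game and suppose there exists a nonempty X ⊆ V such that A(X) is a subarena that is a 1-trap in A and Player 0 fully wins G(X). Let S_max be the union of all such sets X. Then A(S_max) is a subarena that is a 1-trap, Player 0 fully wins G(S_max), Win_0(G) = S_max, and Win_1(G) = V ∖ S_max. -/

import Mathlib

open Set

/-- An arena: a finite directed bipartite graph where every vertex has an
outgoing edge.  The vertex set is `V0 ∪ V1` inside the finite type `α`. -/
structure Arena (α : Type) [Fintype α] where
  V0 : Set α
  V1 : Set α
  E : Set (α × α)
  disj : Disjoint V0 V1
  bipartite : E ⊆ (V0 ×ˢ V1) ∪ (V1 ×ˢ V0)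
  succ : ∀ v ∈ V0 ∪ V1, ∃ u, (v, u) ∈ E

variable {α : Type} [Fintype α]

/-- The set of positions of the arena. -/
def Arena.V (A : Arena α) : Set α := A.V0 ∪ A.V1

/-- The positions of Player σ (σ ∈ {0,1}). -/
def Arena.P (A : Arena α) (σ : Fin 2) : Set α := if σ = 0 then A.V0 else A.V1

/-- `A(X)` is a subarena: `X ⊆ V` and every vertex of `X` has an
outgoing edge inside `X`. -/
def Subarena (A : Arena α) (X : Set α) : Prop :=
  X ⊆ A.V ∧ ∀ v ∈ X, ∃ u ∈ X, (v, u) ∈ A.E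

/-- `A(Y)` is a σ-trap of the pseudo-arena `A(X)`: every vertex of
`Y ∩ V_{1-σ}` has an `E`-successor in `Y`, and every vertex of `Y ∩ V_σ`
has all of its `E`-successors inside `X` lying in `Y`.
A σ-trap of `A` itself is `TrapIn A A.V σ Y`. -/
def TrapIn (A : Arena α) (X : Set α) (σ : Fin 2) (Y : Set α) : Prop :=
  Y ⊆ X ∧
  (∀ v ∈ Y ∩ A.P (1 - σ), ∃ u ∈ Y, (v, u) ∈ A.E) ∧
  (∀ v ∈ Y ∩ A.P σ, ∀ u, (v, u) ∈ A.E → u ∈ X → u ∈ Y)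

/-- A play of the (pseudo-)arena `A(X)`: an infinite `E`-path staying in `X`. -/
def IsPlayIn (A : Arena α) (X : Set α) (ρ : ℕ → α) : Prop :=
  ∀ i, ρ i ∈ X ∧ (ρ i, ρ (i + 1)) ∈ A.E

/-- The set of vertices occurring infinitely often in the play `ρ`. -/
def InfOcc (ρ : ℕ → α) : Set α := {v | {i | ρ i = v}.Infinite}

/-- A strategy for Player σ in the game played on the pseudo-arena `A(X)`:
it maps a history (the finite prefix before the current vertex) and the
current vertex of `V_σ ∩ X` to an `E`-successor inside `X`. -/
structure StrategyIn (A : Arena α) (X : Set α) (σ : Fin 2) where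
  move : List α → α → α
  legal : ∀ h v, v ∈ X ∩ A.P σ → (v, move h v) ∈ A.E ∧ move h v ∈ X

/-- A play is consistent with a strategy for Player σ if every move from a
vertex of `V_σ` follows the strategy. -/
def ConsistentIn {A : Arena α} {X : Set α} {σ : Fin 2} (s : StrategyIn A X σ)
    (ρ : ℕ → α) : Prop :=
  ∀ i, ρ i ∈ A.P σ → ρ (i + 1) = s.move (List.ofFn fun j : Fin i => ρ j) (ρ i)

/-- Player σ wins the game on `A(X)` (with payoff `payoff` describing the
plays won by Player 0) from position `v`. -/
def WinsFrom (A : Arena α) (X : Set α) (payoff : (ℕ → α) → Prop) (σ : Fin 2)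
    (v : α) : Prop :=
  ∃ s : StrategyIn A X σ, ∀ ρ, IsPlayIn A X ρ → ρ 0 = v → ConsistentIn s ρ →
    (if σ = 0 then payoff ρ else ¬ payoff ρ)

/-- `Win_σ` of the game on `A(X)`. -/
def WinSet (A : Arena α) (X : Set α) (payoff : (ℕ → α) → Prop) (σ : Fin 2) :
    Set α :=
  {v ∈ X | WinsFrom A X payoff σ v}

/-- Player σ fully wins the game on `A(X)`. -/
def FullyWins (A : Arena α) (X : Set α) (payoff : (ℕ → α) → Prop)
    (σ : Fin 2) : Prop :=
  ∀ v ∈ X, WinsFrom A X payoff σ v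

/-- The attractor `Attr_σ(T, A(X))`: the least `W ⊇ T` containing every
`u ∈ X ∩ V_σ` with some `E`-successor in `W ∩ X` and every
`u ∈ X ∩ V_{1-σ}` all of whose `E`-successors inside `X` lie in `W`. -/
def AttrIn (A : Arena α) (X : Set α) (σ : Fin 2) (T : Set α) : Set α :=
  ⋂₀ {W | T ⊆ W ∧
    (∀ u ∈ X ∩ A.P σ, (∃ w ∈ W ∩ X, (u, w) ∈ A.E) → u ∈ W) ∧
    (∀ u ∈ X ∩ A.P (1 - σ), (∀ w, (u, w) ∈ A.E → w ∈ X → w ∈ W) → u ∈ W)}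

/-- The Müller winning condition: Player 0 wins the play `ρ` iff `Inf(ρ) ∈ Ω`. -/
def MullerPayoff (Ω : Set (Set α)) : (ℕ → α) → Prop := fun ρ => InfOcc ρ ∈ Ω

section MG

open Classical

variable {α : Type} [Fintype α] {A : Arena α}

-- ## Basic facts

lemma fin2_cases (σ : Fin 2) : σ = 0 ∨ σ = 1 := by omega

lemma one_sub_one_sub (σ : Fin 2) : 1 - (1 - σ) = σ := by omega

lemma P_subset_V (σ : Fin 2) : A.P σ ⊆ A.V := by
  rcases fin2_cases σ with h | h <;> subst h <;> intro x hx <;>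
    simp [Arena.P] at hx
  · exact Or.inl hx
  · exact Or.inr hx

lemma mem_P_cases {v : α} (hv : v ∈ A.V) (σ : Fin 2) :
    v ∈ A.P σ ∨ v ∈ A.P (1 - σ) := by
  rcases fin2_cases σ with h | h <;> subst h <;>
    simpa [Arena.P, Arena.V, or_comm] using hv

lemma P_disj {v : α} {σ : Fin 2} (h1 : v ∈ A.P σ) (h2 : v ∈ A.P (1 - σ)) : False := by
  rcases fin2_cases σ with h | h <;> subst h <;>
    simp [Arena.P] at h1 h2 <;> exact A.disj.le_bot ⟨‹_›, ‹_›⟩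

lemma edge_mem {v u : α} (h : (v, u) ∈ A.E) : v ∈ A.V ∧ u ∈ A.V := by
  rcases A.bipartite h with h' | h'
  · exact ⟨Or.inl h'.1, Or.inr h'.2⟩
  · exact ⟨Or.inr h'.1, Or.inl h'.2⟩

lemma subarena_V : Subarena A A.V := by
  refine ⟨le_refl _, fun v hv => ?_⟩
  obtain ⟨u, hu⟩ := A.succ v hv
  exact ⟨u, (edge_mem hu).2, hu⟩

/-- choice of a successor inside `X` (junk if none). -/
noncomputable def fb (A : Arena α) (X : Set α) (w : α) : α :=
  if h : ∃ u ∈ X, (w, u) ∈ A.E then h.choose else w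

lemma fb_spec {X : Set α} (hX : Subarena A X) {w : α} (hw : w ∈ X) :
    fb A X w ∈ X ∧ (w, fb A X w) ∈ A.E := by
  have h : ∃ u ∈ X, (w, u) ∈ A.E := hX.2 w hw
  rw [fb, dif_pos h]
  exact ⟨h.choose_spec.1, h.choose_spec.2⟩

/-- an arbitrary legal strategy on a subarena. -/
noncomputable def fbStrat (A : Arena α) (X : Set α) (hX : Subarena A X) (σ : Fin 2) :
    StrategyIn A X σ where
  move := fun _ w => fb A X w
  legal := fun _ v hv => ⟨(fb_spec hX hv.1).2, (fb_spec hX hv.1).1⟩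

-- ## InfOcc lemmas

lemma infinite_nat_iff_unbounded {S : Set ℕ} : S.Infinite ↔ ∀ N, ∃ i ≥ N, i ∈ S := by
  constructor
  · intro h N
    obtain ⟨i, hi, hiN⟩ := h.exists_gt N
    exact ⟨i, le_of_lt hiN, hi⟩
  · intro h
    intro hf
    obtain ⟨i, hi, hiS⟩ := h ((hf.toFinset.sup id) + 1)
    have : i ≤ hf.toFinset.sup id := Finset.le_sup (f := id) (hf.mem_toFinset.2 hiS)
    omega

lemma infOcc_shift (ρ : ℕ → α) (m : ℕ) : InfOcc (fun i => ρ (i + m)) = InfOcc ρ := by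
  ext v
  simp only [InfOcc, Set.mem_setOf_eq, infinite_nat_iff_unbounded]
  constructor
  · intro h N
    obtain ⟨i, hi, he⟩ := h N
    exact ⟨i + m, le_trans hi (Nat.le_add_right _ _), he⟩
  · intro h N
    obtain ⟨i, hi, he⟩ := h (N + m)
    exact ⟨i - m, by omega, by simpa [Nat.sub_add_cancel (by omega : m ≤ i)] using he⟩

lemma infOcc_nonempty (ρ : ℕ → α) : (InfOcc ρ).Nonempty := by
  obtain ⟨v, hv⟩ := Finite.exists_infinite_fiber ρ
  refine ⟨v, ?_⟩
  have : (ρ ⁻¹' {v}).Infinite := Set.infinite_coe_iff.1 hv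
  simpa [InfOcc, Set.preimage, Set.mem_singleton_iff] using this

lemma infOcc_subset_of_eventually {ρ : ℕ → α} {S : Set α} {N : ℕ}
    (h : ∀ i ≥ N, ρ i ∈ S) : InfOcc ρ ⊆ S := by
  intro v hv
  obtain ⟨i, hi, he⟩ := (infinite_nat_iff_unbounded.1 hv) N
  exact he ▸ h i hi

lemma infOcc_subset_of_play {X : Set α} {ρ : ℕ → α} (h : IsPlayIn A X ρ) :
    InfOcc ρ ⊆ X :=
  infOcc_subset_of_eventually (N := 0) (fun i _ => (h i).1)

/-- some vertex of a finite set hit infinitely often occurs infinitely often -/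
lemma exists_infOcc_of_frequently {ρ : ℕ → α} {S : Set α}
    (h : ∀ N, ∃ i ≥ N, ρ i ∈ S) : ∃ v ∈ S, v ∈ InfOcc ρ := by
  have hinf : {i | ρ i ∈ S}.Infinite := infinite_nat_iff_unbounded.2 h
  by_contra hc
  push_neg at hc
  have : {i | ρ i ∈ S} ⊆ ⋃ v ∈ S, {i | ρ i = v} := by
    intro i hi; exact Set.mem_biUnion hi rfl
  have hfin : (⋃ v ∈ S, {i | ρ i = v}).Finite := by
    refine Set.Finite.biUnion (Set.toFinite S) (fun v hv => ?_)
    have := hc v hv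
    simpa [InfOcc, Set.not_infinite] using this
  exact hinf (hfin.subset this)

end MG

section MG2

open Classical

variable {α : Type} [Fintype α] {A : Arena α}

-- ## ofFn helper lemmas

lemma ofFn_succ_last (ρ : ℕ → α) (t : ℕ) :
    (List.ofFn fun j : Fin (t + 1) => ρ j) =
      (List.ofFn fun j : Fin t => ρ j) ++ [ρ t] := by
  rw [List.ofFn_succ']
  simp [List.concat_eq_append, Fin.last]

lemma ofFn_drop (ρ : ℕ → α) (t m : ℕ) (h : m ≤ t) :
    (List.ofFn fun j : Fin t => ρ j).drop m =
      List.ofFn fun j : Fin (t - m) => ρ (m + j) := by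
  apply List.ext_getElem
  · simp
  · intro n h1 h2
    simp only [List.getElem_drop, List.getElem_ofFn]

lemma ofFn_append (ρ : ℕ → α) (f g : ℕ → α) (n i : ℕ) (h : n ≤ i)
    (hf : ∀ j < n, ρ j = f j) (hg : ∀ j, ρ (n + j) = g j) :
    (List.ofFn fun j : Fin i => ρ j) =
      (List.ofFn fun j : Fin n => f j) ++ (List.ofFn fun j : Fin (i - n) => g j) := by
  apply List.ext_getElem
  · simp; omega
  · intro m h1 h2
    simp only [List.getElem_ofFn] at *
    by_cases hm : m < n
    · rw [List.getElem_append_left (by simpa using hm)]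
      simp only [List.getElem_ofFn]
      exact hf m hm
    · rw [List.getElem_append_right (by simpa using hm)]
      simp only [List.getElem_ofFn, List.length_ofFn]
      rw [← hg (m - n)]
      congr 1
      omega

-- ## Play construction

/-- Extend a finite path `p` in `X` to an infinite play, choosing each next
vertex by the function `F` applied to (history, current vertex). -/
lemma buildPlay (X : Set α) (F : List α → α → α)
    (hF : ∀ l w, w ∈ X → F l w ∈ X ∧ (w, F l w) ∈ A.E)
    (p : List α) (hne : p ≠ [])
    (hmem : ∀ (i : ℕ) (h : i < p.length), p[i] ∈ X)
    (hedge : ∀ (i : ℕ) (h : i + 1 < p.length), (p[i], p[i + 1]) ∈ A.E) :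
    ∃ ρ : ℕ → α, (∀ (i : ℕ) (h : i < p.length), ρ i = p[i]) ∧
      IsPlayIn A X ρ ∧
      ∀ i, p.length ≤ i + 1 → ρ (i + 1) = F (List.ofFn fun j : Fin i => ρ j) (ρ i) := by
  have hp0 : 0 < p.length := List.length_pos_iff.2 hne
  set w0 : α := p[0]
  let ext : List α → List α := fun l => l ++ [F l.dropLast (l.getD (l.length - 1) w0)]
  let L : ℕ → List α := fun n => Nat.rec p (fun _ l => ext l) n
  have hLsucc : ∀ n, L (n + 1) = ext (L n) := fun n => rfl
  have hLlen : ∀ n, (L n).length = p.length + n := by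
    intro n; induction n with
    | zero => rfl
    | succ n ih =>
      rw [hLsucc]
      show ((L n) ++ _).length = _
      rw [List.length_append, ih]
      simp; omega
  have hLpre : ∀ n, L n <+: L (n + 1) := fun n => List.prefix_append _ _
  have hLpre' : ∀ n m, n ≤ m → L n <+: L m := by
    intro n m h
    induction m with
    | zero => cases Nat.le_zero.1 h; exact List.prefix_refl _
    | succ m ih =>
      rcases Nat.lt_or_ge n (m + 1) with h' | h'
      · exact (ih (by omega)).trans (hLpre m)
      · have : n = m + 1 := by omega
        subst this; exact List.prefix_refl _
  set ρ : ℕ → α := fun i => (L (i + 1)).getD i w0 with hρ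
  have hρL : ∀ (m i : ℕ) (h : i < (L m).length), ρ i = (L m)[i] := by
    intro m i h
    have hi1 : i < (L (i + 1)).length := by have := hLlen (i + 1); omega
    rcases Nat.le_total m (i + 1) with hc | hc
    · have := (hLpre' m (i + 1) hc).getElem h
      rw [hρ]; simp only [List.getD_eq_getElem _ _ hi1]; exact this.symm
    · have := (hLpre' (i + 1) m hc).getElem hi1
      rw [hρ]; simp only [List.getD_eq_getElem _ _ hi1]; exact this
  have hinit : ∀ (i : ℕ) (h : i < p.length), ρ i = p[i] := by
    intro i h
    exact hρL 0 i (by rw [hLlen]; omega)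
  have hofn : ∀ n m, p.length + n = m → L n = List.ofFn (fun j : Fin m => ρ j) := by
    intro n m hm
    apply List.ext_getElem
    · simp [hLlen, hm]
    · intro q h1 h2
      rw [List.getElem_ofFn]
      exact (hρL n q h1).symm
  have hrec : ∀ i, p.length ≤ i + 1 →
      ρ (i + 1) = F (List.ofFn fun j : Fin i => ρ j) (ρ i) := by
    intro i hi
    set n : ℕ := i + 1 - p.length with hn
    have hi1 : i + 1 = p.length + n := by omega
    have hlt1 : i + 1 < (L (n + 1)).length := by have := hLlen (n + 1); omega
    have h1 : ρ (i + 1) = (L (n + 1))[i + 1]'hlt1 := hρL (n + 1) (i + 1) hlt1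
    have hlnlen : (L n).length = i + 1 := by have := hLlen n; omega
    have h2 : (L (n + 1))[i + 1]'hlt1 =
        F (L n).dropLast ((L n).getD ((L n).length - 1) w0) := by
      have heq : L (n + 1) = L n ++ [F (L n).dropLast ((L n).getD ((L n).length - 1) w0)] := rfl
      rw [List.getElem_of_eq heq, List.getElem_append_right (by omega)]
      simp [hlnlen]
    have hlt2 : i < (L n).length := by omega
    have h3 : (L n).getD ((L n).length - 1) w0 = ρ i := by
      rw [List.getD_eq_getElem _ _ (by omega : (L n).length - 1 < (L n).length)]
      have he : (L n).length - 1 = i := by omega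
      rw [← hρL n ((L n).length - 1) (by omega)]
      rw [he]
    have h4 : (L n).dropLast = List.ofFn (fun j : Fin i => ρ j) := by
      rw [hofn n (i + 1) (by omega), ofFn_succ_last]
      simp
    rw [h1, h2, h3, h4]
  have hX : ∀ i, ρ i ∈ X := by
    intro i
    induction i using Nat.strong_induction_on with
    | _ i ih =>
      rcases Nat.lt_or_ge i p.length with h | h
      · rw [hinit i h]; exact hmem i h
      · obtain ⟨i', rfl⟩ : ∃ i', i = i' + 1 := ⟨i - 1, by omega⟩
        rw [hrec i' (by omega)]
        exact (hF _ _ (ih i' (by omega))).1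
  refine ⟨ρ, hinit, fun i => ⟨hX i, ?_⟩, hrec⟩
  rcases Nat.lt_or_ge (i + 1) p.length with h | h
  · rw [hinit i (by omega), hinit (i + 1) h]
    exact hedge i h
  · rw [hrec i h]
    exact (hF _ _ (hX i)).2

end MG2

section MG3

open Classical

variable {α : Type} [Fintype α] {A : Arena α} {Ω : Set (Set α)}

/-- what it means for player `σ` to win a play -/
def winsP (Ω : Set (Set α)) (σ : Fin 2) (ρ : ℕ → α) : Prop :=
  if σ = 0 then MullerPayoff Ω ρ else ¬ MullerPayoff Ω ρ

lemma winsFrom_iff {X : Set α} {σ : Fin 2} {v : α} :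
    WinsFrom A X (MullerPayoff Ω) σ v ↔
      ∃ s : StrategyIn A X σ, ∀ ρ, IsPlayIn A X ρ → ρ 0 = v → ConsistentIn s ρ →
        winsP Ω σ ρ := Iff.rfl

lemma winsP_congr {σ : Fin 2} {ρ ρ' : ℕ → α} (h : InfOcc ρ = InfOcc ρ') :
    winsP Ω σ ρ ↔ winsP Ω σ ρ' := by
  unfold winsP MullerPayoff
  rw [h]

lemma winsP_shift {σ : Fin 2} (ρ : ℕ → α) (m : ℕ) :
    winsP Ω σ (fun i => ρ (i + m)) ↔ winsP Ω σ ρ :=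
  winsP_congr (infOcc_shift ρ m)

/-- a winning strategy from `u`, if one exists (else the default strategy) -/
noncomputable def winStrat {X : Set α} (hX : Subarena A X) (Ω : Set (Set α))
    (π : Fin 2) (u : α) : StrategyIn A X π :=
  if h : WinsFrom A X (MullerPayoff Ω) π u then h.choose else fbStrat A X hX π

lemma winStrat_spec {X : Set α} (hX : Subarena A X) {π : Fin 2} {u : α}
    (hu : WinsFrom A X (MullerPayoff Ω) π u) :
    ∀ ρ, IsPlayIn A X ρ → ρ 0 = u → ConsistentIn (winStrat hX Ω π u) ρ →
      winsP Ω π ρ := by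
  rw [winStrat, dif_pos hu]
  exact hu.choose_spec

/-- L2: positions along a consistent play with a winning strategy are winning -/
lemma stay {X : Set α} {π : Fin 2} {v : α} (s : StrategyIn A X π)
    (hwin : ∀ ρ, IsPlayIn A X ρ → ρ 0 = v → ConsistentIn s ρ → winsP Ω π ρ)
    {ρ : ℕ → α} (hρ : IsPlayIn A X ρ) (h0 : ρ 0 = v) (hc : ConsistentIn s ρ)
    (n : ℕ) : WinsFrom A X (MullerPayoff Ω) π (ρ n) := by
  set pl : List α := List.ofFn (fun j : Fin n => ρ j) with hpl
  refine ⟨⟨fun h w => s.move (pl ++ h) w, fun h w hw => s.legal _ w hw⟩, ?_⟩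
  intro τ hτ hτ0 hτc
  show winsP Ω π τ
  set ρ' : ℕ → α := fun i => if i < n then ρ i else τ (i - n) with hρ'
  have hρ'lt : ∀ i, i < n → ρ' i = ρ i := by intro i hi; simp [hρ', hi]
  have hρ'ge : ∀ i, ρ' (n + i) = τ i := by
    intro i; simp only [hρ']
    rw [if_neg (by omega)]
    congr 1; omega
  have hρ'n : ∀ i, n ≤ i → ρ' i = τ (i - n) := by
    intro i hi
    have := hρ'ge (i - n)
    rwa [show n + (i - n) = i by omega] at this
  have hρρ' : ∀ i, i ≤ n → ρ' i = ρ i := by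
    intro i hi
    rcases Nat.lt_or_ge i n with h | h
    · exact hρ'lt i h
    · have : i = n := by omega
      subst this
      rw [hρ'n i (le_refl _), Nat.sub_self, hτ0]
  have hhist : ∀ i, n ≤ i → (List.ofFn fun j : Fin i => ρ' j) =
      pl ++ (List.ofFn fun j : Fin (i - n) => τ j) := by
    intro i hi
    exact ofFn_append ρ' ρ τ n i hi (fun j hj => hρ'lt j hj) hρ'ge
  have hplay' : IsPlayIn A X ρ' := by
    intro i
    rcases Nat.lt_or_ge (i + 1) n with h | h
    · rw [hρ'lt i (by omega), hρ'lt (i + 1) h]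
      exact hρ i
    · rcases Nat.lt_or_ge i n with h2 | h2
      · have hin : i + 1 = n := by omega
        rw [hρ'lt i (by omega), hρρ' (i + 1) (by omega)]
        exact hρ i
      · rw [hρ'n i h2, hρ'n (i + 1) (by omega), show i + 1 - n = (i - n) + 1 by omega]
        exact ⟨(hτ (i - n)).1, (hτ (i - n)).2⟩
  have hcons' : ConsistentIn s ρ' := by
    intro i hP
    rcases Nat.lt_or_ge i n with h | h
    · rw [hρρ' (i + 1) (by omega), hρ'lt i h] at *
      rw [hc i hP]
      congr 1
      apply List.ext_getElem (by simp)
      intro q h1 h2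
      simp only [List.getElem_ofFn]
      exact (hρ'lt q (by simp at h1; omega)).symm
    · rw [hρ'n i h] at hP
      rw [hρ'n (i + 1) (by omega), show i + 1 - n = (i - n) + 1 by omega,
        hτc (i - n) hP, hhist i h, hρ'n i h]
  have hwin' : winsP Ω π ρ' := hwin ρ' hplay' (by rw [hρρ' 0 (by omega), h0]) hcons'
  have : InfOcc ρ' = InfOcc τ := by
    have he : (fun i => ρ' (i + n)) = τ := by
      funext i
      rw [Nat.add_comm]
      exact hρ'ge i
    rw [← infOcc_shift ρ' n, he]
  exact (winsP_congr this).1 hwin'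

/-- L1: one-step closure of the winning set -/
lemma step_win {X : Set α} (hX : Subarena A X) {π : Fin 2} {v : α} (hv : v ∈ X)
    (H : (v ∈ A.P π ∧ ∃ u, (v, u) ∈ A.E ∧ u ∈ WinSet A X (MullerPayoff Ω) π) ∨
         (v ∉ A.P π ∧ ∀ u, (v, u) ∈ A.E → u ∈ X → u ∈ WinSet A X (MullerPayoff Ω) π)) :
    v ∈ WinSet A X (MullerPayoff Ω) π := by
  -- the first move, in case we own `v`
  have hf0 : ∃ f0 : α, (v, f0) ∈ A.E ∧ f0 ∈ X ∧
      (v ∈ A.P π → f0 ∈ WinSet A X (MullerPayoff Ω) π) := by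
    rcases H with ⟨hP, u, he, hu⟩ | ⟨hP, _⟩
    · exact ⟨u, he, hu.1, fun _ => hu⟩
    · exact ⟨fb A X v, (fb_spec hX hv).2, (fb_spec hX hv).1, fun h => absurd h hP⟩
  obtain ⟨f0, hf0e, hf0X, hf0W⟩ := hf0
  set W := WinSet A X (MullerPayoff Ω) π with hW
  set sc : StrategyIn A X π :=
    ⟨fun h w => if h.length = 0 then (if w = v then f0 else fb A X w)
      else (winStrat hX Ω π (h.getD 1 w)).move (h.drop 1) w,
     by
      intro h w hw
      by_cases h0 : h.length = 0
      · simp only [h0, if_true]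
        by_cases hwv : w = v
        · subst hwv; simp only [if_pos rfl]; exact ⟨hf0e, hf0X⟩
        · simp only [if_neg hwv]
          exact ⟨(fb_spec hX hw.1).2, (fb_spec hX hw.1).1⟩
      · simp only [h0, if_false]
        exact (winStrat hX Ω π (h.getD 1 w)).legal _ w hw⟩ with hsc
  refine ⟨hv, sc, ?_⟩
  intro ρ hρ h0 hcons
  show winsP Ω π ρ
  -- first step lands in the winning set
  have h1W : ρ 1 ∈ W := by
    rcases H with ⟨hP, u, he, hu⟩ | ⟨hP, hall⟩
    · have := hcons 0 (h0 ▸ hP)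
      simp only [hsc] at this
      rw [this]
      simp only [List.ofFn_zero, List.length_nil, if_pos rfl, h0, if_pos rfl]
      exact hf0W hP
    · exact hall (ρ 1) (h0 ▸ (hρ 0).2) (hρ 1).1
  set u := ρ 1 with hu1
  set τ : ℕ → α := fun i => ρ (i + 1) with hτ
  have hτplay : IsPlayIn A X τ := fun i => (hρ (i + 1))
  have hτcons : ConsistentIn (winStrat hX Ω π u) τ := by
    intro i hP
    have := hcons (i + 1) (by exact hP)
    simp only [hsc] at this
    rw [show τ (i + 1) = ρ (i + 1 + 1) from rfl, this]
    have hlen : (List.ofFn fun j : Fin (i + 1) => ρ j).length = i + 1 := by simp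
    rw [if_neg (by omega)]
    have hgd : (List.ofFn fun j : Fin (i + 1) => ρ j).getD 1 (ρ (i + 1)) = u := by
      rcases Nat.lt_or_ge 1 (i + 1) with h | h
      · rw [List.getD_eq_getElem _ _ (by simp; omega), List.getElem_ofFn]
      · have : i = 0 := by omega
        subst this
        have hl : (List.ofFn fun j : Fin (0 + 1) => ρ j) = [ρ 0] := by
          simp [List.ofFn_succ]
        rw [hl]
        rfl
    rw [hgd]
    congr 1
    rw [ofFn_drop ρ (i + 1) 1 (by omega)]
    congr 1
    funext j
    congr 1
    omega
  have := winStrat_spec hX h1W.2 τ hτplay rfl hτcons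
  exact (winsP_shift ρ 1).1 this

end MG3

section MG4

open Classical

variable {α : Type} [Fintype α] {A : Arena α} {Ω : Set (Set α)}

/-- W4: the complement of the opponent's winning set is a subarena and a trap. -/
lemma residual_facts {X : Set α} (hX : Subarena A X) (π : Fin 2) :
    Subarena A (X \ WinSet A X (MullerPayoff Ω) π) ∧
      TrapIn A X π (X \ WinSet A X (MullerPayoff Ω) π) := by
  set W := WinSet A X (MullerPayoff Ω) π with hW
  set Y := X \ W with hYdef
  have hYX : Y ⊆ X := Set.diff_subset
  have hPcase : ∀ v ∈ Y, v ∈ A.P π ∨ v ∈ A.P (1 - π) :=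
    fun v hv => mem_P_cases (hX.1 (hYX hv)) π
  have htrap3 : ∀ v ∈ Y ∩ A.P π, ∀ u, (v, u) ∈ A.E → u ∈ X → u ∈ Y := by
    rintro v ⟨hvY, hvP⟩ u he huX
    by_contra huY
    have huW : u ∈ W := by
      by_contra h'
      exact huY ⟨huX, h'⟩
    exact hvY.2 (step_win hX hvY.1 (Or.inl ⟨hvP, u, he, huW⟩))
  have htrap2 : ∀ v ∈ Y ∩ A.P (1 - π), ∃ u ∈ Y, (v, u) ∈ A.E := by
    rintro v ⟨hvY, hvP⟩
    by_contra hc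
    push_neg at hc
    have : ∀ u, (v, u) ∈ A.E → u ∈ X → u ∈ W := by
      intro u he huX
      by_contra h'
      exact hc u ⟨huX, h'⟩ he
    have hvnP : v ∉ A.P π := fun h => P_disj h hvP
    exact hvY.2 (step_win hX hvY.1 (Or.inr ⟨hvnP, this⟩))
  constructor
  · refine ⟨hYX.trans hX.1, fun v hv => ?_⟩
    rcases hPcase v hv with h | h
    · obtain ⟨u, huX, he⟩ := hX.2 v (hYX hv)
      exact ⟨u, htrap3 v ⟨hv, h⟩ u he huX, he⟩
    · obtain ⟨u, hu, he⟩ := htrap2 v ⟨hv, h⟩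
      exact ⟨u, hu, he⟩
  · exact ⟨hYX, htrap2, htrap3⟩

/-- index of the first element of `h` (or `w`) outside `Y` -/
lemma exists_bad_index {Y : Set α} {h : List α} {w : α}
    (hall : ¬ ∀ x ∈ h, x ∈ Y) : ∃ j, j < h.length ∧ h.getD j w ∉ Y := by
  push_neg at hall
  obtain ⟨x, hx, hxY⟩ := hall
  obtain ⟨j, hj, rfl⟩ := List.getElem_of_mem hx
  exact ⟨j, hj, by rw [List.getD_eq_getElem _ _ hj]; exact hxY⟩

/-- W5: in the residual game, the opponent wins nowhere. -/
lemma residual_win_empty {X : Set α} (hX : Subarena A X) (π : Fin 2) :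
    WinSet A (X \ WinSet A X (MullerPayoff Ω) π) (MullerPayoff Ω) π = ∅ := by
  set W := WinSet A X (MullerPayoff Ω) π with hW
  set Y := X \ W with hYdef
  by_contra hne
  obtain ⟨v, hvY, s', hs'⟩ := Set.nonempty_iff_ne_empty.2 hne
  set sc : StrategyIn A X π :=
    ⟨fun h w =>
      if hall : ∀ x ∈ h, x ∈ Y then
        (if w ∈ Y then s'.move h w else (winStrat hX Ω π w).move [] w)
      else
        (winStrat hX Ω π (h.getD (Nat.find (exists_bad_index (w := w) hall)) w)).move
          (h.drop (Nat.find (exists_bad_index (w := w) hall))) w,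
     by
      intro h w hw
      by_cases hall : ∀ x ∈ h, x ∈ Y
      · rw [dif_pos hall]
        by_cases hwY : w ∈ Y
        · rw [if_pos hwY]
          have := s'.legal h w ⟨hwY, hw.2⟩
          exact ⟨this.1, this.2.1⟩
        · rw [if_neg hwY]
          exact (winStrat hX Ω π w).legal [] w hw
      · rw [dif_neg hall]
        exact (winStrat hX Ω π _).legal _ w hw⟩ with hsc
  have hvW : v ∈ W := by
    refine ⟨hvY.1, sc, ?_⟩
    intro ρ hρ h0 hcons
    show winsP Ω π ρ
    by_cases hY : ∀ i, ρ i ∈ Y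
    · have hplayY : IsPlayIn A Y ρ := fun i => ⟨hY i, (hρ i).2⟩
      have hconsY : ConsistentIn s' ρ := by
        intro i hP
        have hgl := hcons i hP
        rw [hsc] at hgl
        dsimp only at hgl
        have hall : ∀ x ∈ (List.ofFn fun j : Fin i => ρ j), x ∈ Y := by
          intro x hx
          obtain ⟨j, rfl⟩ := List.mem_ofFn.1 hx
          exact hY j
        rw [dif_pos hall, if_pos (hY i)] at hgl
        exact hgl
      exact hs' ρ hplayY h0 hconsY
    · push_neg at hY
      have hfind : ∃ n, ρ n ∉ Y := hY
      set n := Nat.find hfind with hn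
      have hnY : ρ n ∉ Y := Nat.find_spec hfind
      have hmin : ∀ j, j < n → ρ j ∈ Y := by
        intro j hj
        by_contra h'
        have : n ≤ j := Nat.find_le h'
        omega
      have hnW : ρ n ∈ W := by
        have hx : ρ n ∈ X := (hρ n).1
        by_contra h'
        exact hnY ⟨hx, h'⟩
      set τ : ℕ → α := fun i => ρ (i + n) with hτ
      have hτplay : IsPlayIn A X τ := by
        intro i
        have h1 := hρ (i + n)
        refine ⟨h1.1, ?_⟩
        show (ρ (i + n), ρ (i + 1 + n)) ∈ A.E
        rw [show i + 1 + n = i + n + 1 by omega]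
        exact h1.2
      have hτ0 : τ 0 = ρ n := by
        show ρ (0 + n) = ρ n
        rw [Nat.zero_add]
      have hτcons : ConsistentIn (winStrat hX Ω π (ρ n)) τ := by
        intro i hP
        rcases Nat.eq_zero_or_pos i with rfl | hi
        · have hP' : ρ n ∈ A.P π := by
            have h' : ρ (0 + n) ∈ A.P π := hP
            rwa [Nat.zero_add] at h'
          have hgl := hcons n hP'
          rw [hsc] at hgl
          dsimp only at hgl
          have hall : ∀ x ∈ (List.ofFn fun j : Fin n => ρ j), x ∈ Y := by
            intro x hx
            obtain ⟨j, rfl⟩ := List.mem_ofFn.1 hx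
            exact hmin j j.2
          rw [dif_pos hall, if_neg hnY] at hgl
          show ρ (0 + 1 + n) = _
          rw [show 0 + 1 + n = n + 1 by omega, hgl,
            show (List.ofFn fun j : Fin 0 => τ j) = ([] : List α) from by simp, hτ0]
        · have hP' : ρ (i + n) ∈ A.P π := hP
          have hgl := hcons (i + n) hP'
          rw [hsc] at hgl
          dsimp only at hgl
          have hall : ¬ ∀ x ∈ (List.ofFn fun j : Fin (i + n) => ρ j), x ∈ Y := by
            intro hc'
            refine hnY (hc' (ρ n) ?_)
            rw [List.mem_ofFn]
            exact ⟨⟨n, by omega⟩, rfl⟩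
          rw [dif_neg hall] at hgl
          set hex := exists_bad_index (w := ρ (i + n)) hall with hhex
          have hfindeq : Nat.find hex = n := by
            rw [Nat.find_eq_iff]
            constructor
            · refine ⟨by simp; omega, ?_⟩
              rw [List.getD_eq_getElem _ _ (by simp; omega), List.getElem_ofFn]
              exact hnY
            · rintro m hm ⟨hm1, hm2⟩
              refine hm2 ?_
              rw [List.getD_eq_getElem _ _ hm1, List.getElem_ofFn]
              exact hmin m hm
          rw [hfindeq] at hgl
          have hgd : (List.ofFn fun j : Fin (i + n) => ρ j).getD n (ρ (i + n)) = ρ n := by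
            rw [List.getD_eq_getElem _ _ (by simp; omega), List.getElem_ofFn]
          rw [hgd] at hgl
          have hdrop : (List.ofFn fun j : Fin (i + n) => ρ j).drop n =
              List.ofFn fun j : Fin i => τ j := by
            rw [ofFn_drop ρ (i + n) n (by omega)]
            have hin : i + n - n = i := by omega
            rw [hin]
            congr 1
            funext j
            show ρ (n + j) = ρ (j + n)
            congr 1
            omega
          rw [hdrop] at hgl
          show ρ (i + 1 + n) = _
          rw [show i + 1 + n = i + n + 1 by omega, hgl]
      have := winStrat_spec hX hnW.2 τ hτplay hτ0 hτcons
      exact (winsP_shift ρ n).1 this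
  exact hvY.2 hvW

/-- W6: lifting a winning strategy from an opponent-trap to the whole game. -/
lemma lift_win {X Y : Set α} (hX : Subarena A X) (hYX : Y ⊆ X) {π : Fin 2}
    (htrap : TrapIn A X (1 - π) Y) {v : α} (hv : v ∈ Y)
    (hw : WinsFrom A Y (MullerPayoff Ω) π v) :
    WinsFrom A X (MullerPayoff Ω) π v := by
  obtain ⟨s', hs'⟩ := hw
  set sc : StrategyIn A X π :=
    ⟨fun h w => if w ∈ Y then s'.move h w else fb A X w,
     by
      intro h w hw'
      by_cases hwY : w ∈ Y
      · rw [if_pos hwY]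
        have := s'.legal h w ⟨hwY, hw'.2⟩
        exact ⟨this.1, hYX this.2⟩
      · rw [if_neg hwY]
        exact ⟨(fb_spec hX hw'.1).2, (fb_spec hX hw'.1).1⟩⟩ with hsc
  refine ⟨sc, ?_⟩
  intro ρ hρ h0 hcons
  show winsP Ω π ρ
  have hY : ∀ i, ρ i ∈ Y := by
    intro i
    induction i with
    | zero => rw [h0]; exact hv
    | succ i ih =>
      have hiV : ρ i ∈ A.V := hX.1 (hYX ih)
      rcases mem_P_cases hiV π with hP | hP
      · have hgl := hcons i hP
        rw [hsc] at hgl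
        dsimp only at hgl
        rw [if_pos ih] at hgl
        rw [hgl]
        exact (s'.legal _ _ ⟨ih, hP⟩).2
      · exact htrap.2.2 (ρ i) ⟨ih, hP⟩ (ρ (i + 1)) (hρ i).2 (hρ (i + 1)).1
  have hplayY : IsPlayIn A Y ρ := fun i => ⟨hY i, (hρ i).2⟩
  have hconsY : ConsistentIn s' ρ := by
    intro i hP
    have hgl := hcons i hP
    rw [hsc] at hgl
    dsimp only at hgl
    rw [if_pos (hY i)] at hgl
    exact hgl
  exact hs' ρ hplayY h0 hconsY

/-- W7: the two winning sets are disjoint. -/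
lemma win_disjoint {X : Set α} (hX : Subarena A X) :
    WinSet A X (MullerPayoff Ω) 0 ∩ WinSet A X (MullerPayoff Ω) 1 = ∅ := by
  by_contra hne
  obtain ⟨v, ⟨hv0, s0, hs0⟩, ⟨hv1, s1, hs1⟩⟩ := Set.nonempty_iff_ne_empty.2 hne
  set F : List α → α → α := fun l w =>
    if w ∈ A.P 0 then s0.move l w else if w ∈ A.P 1 then s1.move l w else fb A X w
    with hF
  have hFleg : ∀ l w, w ∈ X → F l w ∈ X ∧ (w, F l w) ∈ A.E := by
    intro l w hw
    rw [hF]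
    dsimp only
    rcases mem_P_cases (hX.1 hw) 0 with hP | hP
    · rw [if_pos hP]
      exact ⟨(s0.legal l w ⟨hw, hP⟩).2, (s0.legal l w ⟨hw, hP⟩).1⟩
    · have hP1 : w ∈ A.P 1 := by simpa using hP
      have hnP0 : w ∉ A.P 0 := fun h => P_disj h hP
      rw [if_neg hnP0, if_pos hP1]
      exact ⟨(s1.legal l w ⟨hw, hP1⟩).2, (s1.legal l w ⟨hw, hP1⟩).1⟩
  obtain ⟨ρ, hinit, hplay, hrec⟩ := buildPlay X F hFleg [v] (by simp)
    (by
      intro i h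
      have : i = 0 := by simpa using h
      subst this
      simpa using hv0)
    (by intro i h; simp at h)
  have h0 : ρ 0 = v := by simpa using hinit 0 (by simp)
  have hc0 : ConsistentIn s0 ρ := by
    intro i hP
    rw [hrec i (by simp), hF]
    dsimp only
    rw [if_pos hP]
  have hc1 : ConsistentIn s1 ρ := by
    intro i hP
    have hnP0 : ρ i ∉ A.P 0 := fun h => P_disj h (by simpa using hP)
    rw [hrec i (by simp), hF]
    dsimp only
    rw [if_neg hnP0, if_pos hP]
  have w0 : winsP Ω 0 ρ := hs0 ρ hplay h0 hc0
  have w1 : winsP Ω 1 ρ := hs1 ρ hplay h0 hc1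
  unfold winsP at w0 w1
  simp at w0 w1
  exact w1 w0

end MG4

section MG5

open Classical

variable {α : Type} [Fintype α]

/-- levels of the attractor computation -/
def attrS (A : Arena α) (X : Set α) (σ : Fin 2) (T : Set α) : ℕ → Set α
  | 0 => T
  | n + 1 => attrS A X σ T n ∪
      {u | u ∈ X ∩ A.P σ ∧ ∃ w, (u, w) ∈ A.E ∧ w ∈ X ∧ w ∈ attrS A X σ T n} ∪
      {u | u ∈ X ∩ A.P (1 - σ) ∧ ∀ w, (u, w) ∈ A.E → w ∈ X → w ∈ attrS A X σ T n}

/-- the attractor -/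
def attrU (A : Arena α) (X : Set α) (σ : Fin 2) (T : Set α) : Set α :=
  ⋃ n, attrS A X σ T n

variable {A : Arena α} {X T : Set α} {σ : Fin 2}

lemma attrS_mono_succ (n : ℕ) : attrS A X σ T n ⊆ attrS A X σ T (n + 1) :=
  fun u hu => Or.inl (Or.inl hu)

lemma attrS_mono {m n : ℕ} (h : m ≤ n) : attrS A X σ T m ⊆ attrS A X σ T n := by
  induction n with
  | zero => cases Nat.le_zero.1 h; exact subset_rfl
  | succ n ih =>
    rcases Nat.lt_or_ge m (n + 1) with h' | h'
    · exact (ih (by omega)).trans (attrS_mono_succ n)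
    · have : m = n + 1 := by omega
      subst this; exact subset_rfl

lemma subset_attrU : T ⊆ attrU A X σ T :=
  fun u hu => Set.mem_iUnion.2 ⟨0, hu⟩

/-- level of a vertex in the attractor -/
noncomputable def lvl (A : Arena α) (X : Set α) (σ : Fin 2) (T : Set α) (u : α) : ℕ :=
  if h : ∃ n, u ∈ attrS A X σ T n then Nat.find h else 0

lemma lvl_spec {u : α} (hu : u ∈ attrU A X σ T) :
    u ∈ attrS A X σ T (lvl A X σ T u) := by
  obtain ⟨n, hn⟩ := Set.mem_iUnion.1 hu
  have h : ∃ n, u ∈ attrS A X σ T n := ⟨n, hn⟩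
  rw [lvl, dif_pos h]
  exact Nat.find_spec h

lemma lvl_min {u : α} {n : ℕ} (hn : u ∈ attrS A X σ T n) :
    lvl A X σ T u ≤ n := by
  have h : ∃ n, u ∈ attrS A X σ T n := ⟨n, hn⟩
  rw [lvl, dif_pos h]
  exact Nat.find_le hn

lemma lvl_zero_T {u : α} (hu : u ∈ attrU A X σ T) (h0 : lvl A X σ T u = 0) : u ∈ T := by
  have := lvl_spec hu
  rwa [h0] at this

lemma mem_attrU_of_level {u : α} {n : ℕ} (h : u ∈ attrS A X σ T n) : u ∈ attrU A X σ T :=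
  Set.mem_iUnion.2 ⟨n, h⟩

/-- a σ-vertex of the attractor that is not in the target has a level-decreasing move -/
lemma attr_step_own {u : α} (hu : u ∈ attrU A X σ T) (hT : u ∉ T) (hP : u ∈ A.P σ) :
    ∃ w, (u, w) ∈ A.E ∧ w ∈ X ∧ w ∈ attrU A X σ T ∧
      lvl A X σ T w < lvl A X σ T u := by
  set k := lvl A X σ T u with hk
  have hmem := lvl_spec hu
  have hk0 : k ≠ 0 := by
    intro h
    exact hT (lvl_zero_T hu h)
  obtain ⟨m, hm⟩ : ∃ m, k = m + 1 := ⟨k - 1, by omega⟩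
  rw [← hk, hm] at hmem
  have hnot : u ∉ attrS A X σ T m := by
    intro h
    have := lvl_min h
    omega
  rcases hmem with (h | h) | h
  · exact absurd h hnot
  · obtain ⟨_, w, he, hwX, hw⟩ := h
    exact ⟨w, he, hwX, mem_attrU_of_level hw, by have := lvl_min hw; omega⟩
  · exact absurd hP (fun hP => P_disj hP h.1.2)

/-- an opponent vertex of the attractor not in the target: all its moves decrease level -/
lemma attr_step_opp {u : α} (hu : u ∈ attrU A X σ T) (hT : u ∉ T)
    (hP : u ∈ A.P (1 - σ)) :
    ∀ w, (u, w) ∈ A.E → w ∈ X → w ∈ attrU A X σ T ∧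
      lvl A X σ T w < lvl A X σ T u := by
  set k := lvl A X σ T u with hk
  have hmem := lvl_spec hu
  have hk0 : k ≠ 0 := by
    intro h
    exact hT (lvl_zero_T hu h)
  obtain ⟨m, hm⟩ : ∃ m, k = m + 1 := ⟨k - 1, by omega⟩
  rw [← hk, hm] at hmem
  have hnot : u ∉ attrS A X σ T m := by
    intro h
    have := lvl_min h
    omega
  rcases hmem with (h | h) | h
  · exact absurd h hnot
  · exact absurd hP (fun hP' => P_disj h.1.2 hP')
  · intro w he hwX
    have hw := h.2 w he hwX
    exact ⟨mem_attrU_of_level hw, by have := lvl_min hw; omega⟩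

lemma exists_uniform_level {u : α}
    (hall : ∀ w, (u, w) ∈ A.E → w ∈ X → w ∈ attrU A X σ T) :
    ∃ n, ∀ w, (u, w) ∈ A.E → w ∈ X → w ∈ attrS A X σ T n := by
  set S : Set α := {w | (u, w) ∈ A.E ∧ w ∈ X} with hS
  set n := (S.toFinite.toFinset).sup (lvl A X σ T) with hn
  refine ⟨n, fun w he hwX => ?_⟩
  have hwS : w ∈ S.toFinite.toFinset := by
    rw [Set.Finite.mem_toFinset]
    exact ⟨he, hwX⟩
  have h1 : lvl A X σ T w ≤ n := Finset.le_sup hwS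
  exact attrS_mono h1 (lvl_spec (hall w he hwX))

/-- complement of the attractor: σ-vertices cannot leave it -/
lemma attr_compl_own {u : α} (huX : u ∈ X) (hu : u ∉ attrU A X σ T)
    (hP : u ∈ A.P σ) : ∀ w, (u, w) ∈ A.E → w ∈ X → w ∉ attrU A X σ T := by
  intro w he hwX hw
  obtain ⟨n, hn⟩ := Set.mem_iUnion.1 hw
  exact hu (mem_attrU_of_level (n := n + 1)
    (Or.inl (Or.inr ⟨⟨huX, hP⟩, w, he, hwX, hn⟩)))

/-- complement of the attractor: opponent vertices have a move inside -/
lemma attr_compl_opp {u : α} (hX : Subarena A X) (huX : u ∈ X)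
    (hu : u ∉ attrU A X σ T) (hP : u ∈ A.P (1 - σ)) :
    ∃ w, (u, w) ∈ A.E ∧ w ∈ X ∧ w ∉ attrU A X σ T := by
  by_contra hc
  push_neg at hc
  have hall : ∀ w, (u, w) ∈ A.E → w ∈ X → w ∈ attrU A X σ T := fun w he hw =>
    hc w he hw
  obtain ⟨n, hn⟩ := exists_uniform_level hall
  exact hu (mem_attrU_of_level (n := n + 1) (Or.inr ⟨⟨huX, hP⟩, hn⟩))

/-- the complement of an attractor is a subarena and a σ-trap -/
lemma attr_compl_facts (hX : Subarena A X) :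
    Subarena A (X \ attrU A X σ T) ∧ TrapIn A X σ (X \ attrU A X σ T) := by
  set Y := X \ attrU A X σ T with hY
  have h3 : ∀ v ∈ Y ∩ A.P σ, ∀ u, (v, u) ∈ A.E → u ∈ X → u ∈ Y := by
    rintro v ⟨hvY, hvP⟩ u he huX
    exact ⟨huX, attr_compl_own hvY.1 hvY.2 hvP u he huX⟩
  have h2 : ∀ v ∈ Y ∩ A.P (1 - σ), ∃ u ∈ Y, (v, u) ∈ A.E := by
    rintro v ⟨hvY, hvP⟩
    obtain ⟨w, he, hwX, hw⟩ := attr_compl_opp hX hvY.1 hvY.2 hvP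
    exact ⟨w, ⟨hwX, hw⟩, he⟩
  refine ⟨⟨Set.diff_subset.trans hX.1, fun v hv => ?_⟩, Set.diff_subset, h2, h3⟩
  rcases mem_P_cases (hX.1 hv.1) σ with h | h
  · obtain ⟨u, huX, he⟩ := hX.2 v hv.1
    exact ⟨u, h3 v ⟨hv, h⟩ u he huX, he⟩
  · obtain ⟨u, hu, he⟩ := h2 v ⟨hv, h⟩
    exact ⟨u, hu, he⟩

/-- forcing lemma : if the σ-player always decreases levels inside the
attractor, the play reaches the target. -/
lemma attr_force {ρ : ℕ → α} (hplay : IsPlayIn A X ρ) (hXV : X ⊆ A.V)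
    (hmove : ∀ t, ρ t ∈ attrU A X σ T → ρ t ∉ T → ρ t ∈ A.P σ →
      ρ (t + 1) ∈ attrU A X σ T ∧ lvl A X σ T (ρ (t + 1)) < lvl A X σ T (ρ t)) :
    ∀ t, ρ t ∈ attrU A X σ T → ∃ t' ≥ t, ρ t' ∈ T := by
  intro t ht
  by_cases hT : ρ t ∈ T
  · exact ⟨t, le_refl _, hT⟩
  · -- strong induction on the level
    have : ∀ k, ∀ t, ρ t ∈ attrU A X σ T → lvl A X σ T (ρ t) ≤ k →
        ∃ t' ≥ t, ρ t' ∈ T := by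
      intro k
      induction k with
      | zero =>
        intro t ht hk
        exact ⟨t, le_refl _, lvl_zero_T ht (by omega)⟩
      | succ k ih =>
        intro t ht hk
        by_cases hT' : ρ t ∈ T
        · exact ⟨t, le_refl _, hT'⟩
        · have hnext : ρ (t + 1) ∈ attrU A X σ T ∧
              lvl A X σ T (ρ (t + 1)) < lvl A X σ T (ρ t) := by
            rcases mem_P_cases (hXV (hplay t).1) σ with hP | hP
            · exact hmove t ht hT' hP
            · exact attr_step_opp ht hT' hP (ρ (t + 1)) (hplay t).2 (hplay (t + 1)).1
          obtain ⟨t', ht', hT''⟩ := ih (t + 1) hnext.1 (by omega)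
          exact ⟨t', by omega, hT''⟩
    exact this (lvl A X σ T (ρ t)) t ht (le_refl _)

end MG5

section MG6

open Classical

variable {α : Type} [Fintype α]
variable (A : Arena α) (X : Set α) (σ : Fin 2) (cl : List (Set α))

/-- the `i`-th child set (cyclically) -/
def zMi (i : ℕ) : Set α := cl.getD (i % cl.length) ∅
/-- the target : leave the current child -/
def zTi (i : ℕ) : Set α := X \ zMi cl i
/-- attractor towards the target -/
def zAi (i : ℕ) : Set α := attrU A X σ (zTi X cl i)
/-- the subgame inside the current child -/
def zXMi (i : ℕ) : Set α := X \ zAi A X σ cl i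

/-- one step of the bookkeeping machine.  State: (child index, phase entry
time if we are following the subgame strategy, time). -/
noncomputable def zstep (s : ℕ × Option ℕ × ℕ) (v : α) : ℕ × Option ℕ × ℕ :=
  if v ∈ zXMi A X σ cl (if v ∈ zTi X cl s.1 then s.1 + 1 else s.1)
  then ((if v ∈ zTi X cl s.1 then s.1 + 1 else s.1),
        some ((if v ∈ zTi X cl s.1 then (none : Option ℕ) else s.2.1).getD s.2.2),
        s.2.2 + 1)
  else ((if v ∈ zTi X cl s.1 then s.1 + 1 else s.1), none, s.2.2 + 1)

/-- machine state after reading a history -/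
noncomputable def zmst (h : List α) : ℕ × Option ℕ × ℕ := h.foldl (zstep A X σ cl) (0, none, 0)

/-- machine state after reading `ρ 0, …, ρ t` -/
noncomputable def zS (ρ : ℕ → α) (t : ℕ) : ℕ × Option ℕ × ℕ :=
  zmst A X σ cl (List.ofFn fun j : Fin (t + 1) => ρ j)

variable {A X σ cl}

lemma zS_zero (ρ : ℕ → α) : zS A X σ cl ρ 0 = zstep A X σ cl (0, none, 0) (ρ 0) := by
  have h : (List.ofFn fun j : Fin 1 => ρ j) = [ρ 0] := by
    simp [List.ofFn_succ]
  rw [zS, h]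
  rfl

lemma zS_succ (ρ : ℕ → α) (t : ℕ) :
    zS A X σ cl ρ (t + 1) = zstep A X σ cl (zS A X σ cl ρ t) (ρ (t + 1)) := by
  rw [zS, zS, ofFn_succ_last, zmst, zmst, List.foldl_append]
  rfl

lemma zmst_ofFn (ρ : ℕ → α) (t : ℕ) :
    zstep A X σ cl (zmst A X σ cl (List.ofFn fun j : Fin t => ρ j)) (ρ t) =
      zS A X σ cl ρ t := by
  rw [zS, ofFn_succ_last, zmst, zmst, List.foldl_append]
  rfl

/-- increment characterization -/
lemma zstep_index_cases (s : ℕ × Option ℕ × ℕ) (v : α) :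
    ((zstep A X σ cl s v).1 = s.1 + 1 ∧ v ∈ zTi X cl s.1) ∨
      ((zstep A X σ cl s v).1 = s.1 ∧ v ∉ zTi X cl s.1) := by
  by_cases h1 : v ∈ zTi X cl s.1
  · refine Or.inl ⟨?_, h1⟩
    by_cases h2 : v ∈ zXMi A X σ cl (s.1 + 1) <;> simp [zstep, h1, h2]
  · refine Or.inr ⟨?_, h1⟩
    by_cases h2 : v ∈ zXMi A X σ cl s.1 <;> simp [zstep, h1, h2]

lemma zstep_time (s : ℕ × Option ℕ × ℕ) (v : α) :
    (zstep A X σ cl s v).2.2 = s.2.2 + 1 := by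
  by_cases h1 : v ∈ zTi X cl s.1 <;>
    [(by_cases h2 : v ∈ zXMi A X σ cl (s.1 + 1) <;> simp [zstep, h1, h2]);
     (by_cases h2 : v ∈ zXMi A X σ cl s.1 <;> simp [zstep, h1, h2])]

/-- phase characterization of a step -/
lemma zstep_phase (s : ℕ × Option ℕ × ℕ) (v : α) :
    ((zstep A X σ cl s v).2.1 = none ∧ v ∉ zXMi A X σ cl (zstep A X σ cl s v).1) ∨
    (v ∈ zXMi A X σ cl (zstep A X σ cl s v).1 ∧
      ((zstep A X σ cl s v).2.1 = some s.2.2 ∨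
       ((zstep A X σ cl s v).2.1 = s.2.1 ∧ v ∉ zTi X cl s.1 ∧ s.2.1 ≠ none))) := by
  by_cases h1 : v ∈ zTi X cl s.1
  · by_cases h2 : v ∈ zXMi A X σ cl (s.1 + 1)
    · have hz : zstep A X σ cl s v = (s.1 + 1, some s.2.2, s.2.2 + 1) := by
        simp [zstep, h1, h2]
      rw [hz]
      exact Or.inr ⟨h2, Or.inl rfl⟩
    · have hz : zstep A X σ cl s v = (s.1 + 1, none, s.2.2 + 1) := by
        simp [zstep, h1, h2]
      rw [hz]
      exact Or.inl ⟨rfl, h2⟩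
  · by_cases h2 : v ∈ zXMi A X σ cl s.1
    · rcases hs : s.2.1 with _ | m
      · have hz : zstep A X σ cl s v = (s.1, some s.2.2, s.2.2 + 1) := by
          simp [zstep, h1, h2, hs]
        rw [hz]
        exact Or.inr ⟨h2, Or.inl rfl⟩
      · have hz : zstep A X σ cl s v = (s.1, some m, s.2.2 + 1) := by
          simp [zstep, h1, h2, hs]
        rw [hz]
        exact Or.inr ⟨h2, Or.inr ⟨by simp [hs], h1, by simp [hs]⟩⟩
    · have hz : zstep A X σ cl s v = (s.1, none, s.2.2 + 1) := by
        simp [zstep, h1, h2]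
      rw [hz]
      exact Or.inl ⟨rfl, h2⟩

/-- the combined invariant of the machine along a play -/
lemma zS_invariant (ρ : ℕ → α) (t : ℕ) :
    (zS A X σ cl ρ t).2.2 = t + 1 ∧
    ((zS A X σ cl ρ t).2.1 = none ↔ ρ t ∉ zXMi A X σ cl (zS A X σ cl ρ t).1) ∧
    (∀ m, (zS A X σ cl ρ t).2.1 = some m → m ≤ t ∧
      (m = t ∨ (0 < t ∧ (zS A X σ cl ρ (t - 1)).1 = (zS A X σ cl ρ t).1 ∧
        (zS A X σ cl ρ (t - 1)).2.1 = some m))) := by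
  induction t with
  | zero =>
    rw [zS_zero]
    rcases zstep_phase (A := A) (X := X) (σ := σ) (cl := cl) (0, none, 0) (ρ 0)
      with ⟨h1, h2⟩ | ⟨h2, h3 | ⟨_, _, hne⟩⟩
    · exact ⟨zstep_time _ _, Iff.intro (fun _ => h2) (fun _ => h1),
        fun m hm => by rw [h1] at hm; cases hm⟩
    · refine ⟨zstep_time _ _,
        Iff.intro (fun h => by rw [h3] at h; cases h) (fun h => absurd h2 h),
        fun m hm => ?_⟩
      rw [h3] at hm
      have hm' := Option.some.inj hm
      have hm2 : m = 0 := by simpa using hm'.symm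
      exact ⟨by omega, Or.inl (by omega)⟩
    · exact absurd rfl hne
  | succ t ih =>
    rw [zS_succ]
    have htime : (zstep A X σ cl (zS A X σ cl ρ t) (ρ (t + 1))).2.2 = t + 1 + 1 := by
      rw [zstep_time, ih.1]
    rcases zstep_phase (A := A) (X := X) (σ := σ) (cl := cl) (zS A X σ cl ρ t) (ρ (t + 1))
      with ⟨h1, h2⟩ | ⟨h2, h3 | ⟨h3, hT, hne⟩⟩
    · exact ⟨htime, Iff.intro (fun _ => h2) (fun _ => h1),
        fun m hm => by rw [h1] at hm; cases hm⟩
    · refine ⟨htime,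
        Iff.intro (fun h => by rw [h3] at h; cases h) (fun h => absurd h2 h),
        fun m hm => ?_⟩
      rw [h3] at hm
      have hm' := Option.some.inj hm
      rw [ih.1] at hm'
      exact ⟨by omega, Or.inl (by omega)⟩
    · refine ⟨htime,
        Iff.intro (fun h => by rw [h3] at h; exact absurd h hne)
          (fun h => absurd h2 h),
        fun m hm => ?_⟩
      rw [h3] at hm
      have hmt := ih.2.2 m hm
      have hidx : (zstep A X σ cl (zS A X σ cl ρ t) (ρ (t + 1))).1 = (zS A X σ cl ρ t).1 := by
        rcases zstep_index_cases (A := A) (X := X) (σ := σ) (cl := cl)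
          (zS A X σ cl ρ t) (ρ (t + 1)) with ⟨_, hT'⟩ | ⟨hi, _⟩
        · exact absurd hT' hT
        · exact hi
      refine ⟨by omega, Or.inr ⟨by omega, ?_, ?_⟩⟩
      · rw [show t + 1 - 1 = t by omega, hidx]
      · rw [show t + 1 - 1 = t by omega]
        exact hm

end MG6

section MG6b

open Classical

variable {α : Type} [Fintype α] {A : Arena α} {X : Set α} {σ : Fin 2} {cl : List (Set α)}

lemma zS_phase_mem {ρ : ℕ → α} {t m : ℕ} (h : (zS A X σ cl ρ t).2.1 = some m) :
    ρ t ∈ zXMi A X σ cl (zS A X σ cl ρ t).1 := by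
  have hiff := (zS_invariant (A := A) (X := X) (σ := σ) (cl := cl) ρ t).2.1
  by_contra hc
  rw [← hiff] at hc
  rw [h] at hc
  cases hc

/-- segment lemma : from the entry time `m` up to `t`, the machine has been in
the same phase with the same index, inside the same subgame -/
lemma zS_seg (ρ : ℕ → α) :
    ∀ t m, (zS A X σ cl ρ t).2.1 = some m → ∀ j, m ≤ j → j ≤ t →
      (zS A X σ cl ρ j).1 = (zS A X σ cl ρ t).1 ∧
      (zS A X σ cl ρ j).2.1 = some m ∧
      ρ j ∈ zXMi A X σ cl (zS A X σ cl ρ t).1 := by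
  intro t
  induction t using Nat.strong_induction_on with
  | _ t ih =>
    intro m hm j hmj hjt
    rcases Nat.lt_or_ge j t with hj | hj
    · have hinv := (zS_invariant (A := A) (X := X) (σ := σ) (cl := cl) ρ t).2.2 m hm
      rcases hinv.2 with h | ⟨ht0, hidx, hph⟩
      · omega
      · have := ih (t - 1) (by omega) m hph j hmj (by omega)
        rw [hidx] at this
        exact this
    · have : j = t := by omega
      subst this
      exact ⟨rfl, hm, zS_phase_mem hm⟩

lemma zS_mono_succ (ρ : ℕ → α) (t : ℕ) :
    (zS A X σ cl ρ t).1 ≤ (zS A X σ cl ρ (t + 1)).1 := by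
  rw [zS_succ]
  rcases zstep_index_cases (A := A) (X := X) (σ := σ) (cl := cl)
    (zS A X σ cl ρ t) (ρ (t + 1)) with ⟨h, _⟩ | ⟨h, _⟩ <;> omega

lemma zS_mono (ρ : ℕ → α) {s t : ℕ} (h : s ≤ t) :
    (zS A X σ cl ρ s).1 ≤ (zS A X σ cl ρ t).1 := by
  induction t with
  | zero => cases Nat.le_zero.1 h; exact le_refl _
  | succ t ih =>
    rcases Nat.lt_or_ge s (t + 1) with h' | h'
    · exact le_trans (ih (by omega)) (zS_mono_succ ρ t)
    · have : s = t + 1 := by omega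
      subst this; exact le_refl _

/-- if the index is unbounded, every child is left frequently -/
lemma zS_freq (ρ : ℕ → α) (hub : ∀ B, ∃ t, B ≤ (zS A X σ cl ρ t).1)
    (j B : ℕ) (hj : j < cl.length) :
    ∃ t ≥ B, ρ t ∈ X \ cl.getD j ∅ := by
  set k := cl.length with hk
  set n := j + k * ((zS A X σ cl ρ B).1 + 1) with hn
  have hkpos : 0 < k := by omega
  have hn1 : n % k = j := by
    rw [hn, Nat.add_mul_mod_self_left, Nat.mod_eq_of_lt hj]
  have hle : (zS A X σ cl ρ B).1 + 1 ≤ k * ((zS A X σ cl ρ B).1 + 1) :=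
    Nat.le_mul_of_pos_left _ hkpos
  have hn2 : (zS A X σ cl ρ B).1 < n := by omega
  have hex : ∃ t, n + 1 ≤ (zS A X σ cl ρ t).1 := hub (n + 1)
  set t0 := Nat.find hex with ht0
  have hspec : n + 1 ≤ (zS A X σ cl ρ t0).1 := Nat.find_spec hex
  have ht0pos : 0 < t0 := by
    rcases Nat.eq_zero_or_pos t0 with h | h
    · exfalso
      rw [h] at hspec
      have := zS_mono (A := A) (X := X) (σ := σ) (cl := cl) ρ (Nat.zero_le B)
      omega
    · exact h
  have hmin : (zS A X σ cl ρ (t0 - 1)).1 ≤ n := by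
    have : ¬ n + 1 ≤ (zS A X σ cl ρ (t0 - 1)).1 := Nat.find_min hex (by omega)
    omega
  have hstep : zS A X σ cl ρ t0 = zstep A X σ cl (zS A X σ cl ρ (t0 - 1)) (ρ t0) := by
    rw [show t0 = (t0 - 1) + 1 by omega, zS_succ]
    rw [show t0 - 1 + 1 - 1 = t0 - 1 by omega]
  have hBt0 : B < t0 := by
    by_contra hc
    push_neg at hc
    have := zS_mono (A := A) (X := X) (σ := σ) (cl := cl) ρ hc
    omega
  rcases zstep_index_cases (A := A) (X := X) (σ := σ) (cl := cl)
    (zS A X σ cl ρ (t0 - 1)) (ρ t0) with ⟨hi, hT⟩ | ⟨hi, _⟩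
  · have hidx : (zS A X σ cl ρ (t0 - 1)).1 = n := by
      rw [hstep] at hspec
      omega
    rw [hidx] at hT
    refine ⟨t0, by omega, ?_⟩
    have : zTi X cl n = X \ cl.getD j ∅ := by
      rw [zTi, zMi, ← hk, hn1]
    rwa [this] at hT
  · exfalso
    rw [hstep] at hspec
    omega

/-- if the index is bounded, it is eventually constant -/
lemma zS_const (ρ : ℕ → α) (hnub : ¬ ∀ B, ∃ t, B ≤ (zS A X σ cl ρ t).1) :
    ∃ N0, ∀ t, N0 ≤ t → (zS A X σ cl ρ t).1 = (zS A X σ cl ρ N0).1 := by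
  push_neg at hnub
  obtain ⟨B, hB⟩ := hnub
  set Sv : Set ℕ := {n | ∃ t, (zS A X σ cl ρ t).1 = n} with hSv
  have hfin : Sv.Finite := Set.Finite.subset (Set.finite_Iio B)
    (fun n ⟨t, ht⟩ => by have := hB t; simp; omega)
  have hne : Sv.Nonempty := ⟨(zS A X σ cl ρ 0).1, 0, rfl⟩
  obtain ⟨M, ⟨t0, ht0⟩, hmax⟩ := hfin.exists_maximal hne
  refine ⟨t0, fun t ht => ?_⟩
  have h1 : (zS A X σ cl ρ t0).1 ≤ (zS A X σ cl ρ t).1 := zS_mono ρ ht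
  have h2 : M ≤ (zS A X σ cl ρ t).1 := by omega
  have := hmax ⟨t, rfl⟩ h2
  omega

end MG6b

section MG7

open Classical

variable {α : Type} [Fintype α] {A : Arena α} {Ω : Set (Set α)}

/-- membership in the winning family of player σ -/
def Fmem (Ω : Set (Set α)) (σ : Fin 2) (S : Set α) : Prop :=
  if σ = 0 then S ∈ Ω else S ∉ Ω

lemma winsP_iff_Fmem {σ : Fin 2} {ρ : ℕ → α} :
    winsP Ω σ ρ ↔ Fmem Ω σ (InfOcc ρ) := Iff.rfl

lemma Fmem_of_not {σ : Fin 2} {S : Set α} (h : ¬ Fmem Ω (1 - σ) S) : Fmem Ω σ S := by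
  rcases fin2_cases σ with h' | h' <;> subst h' <;>
    simp [Fmem] at h ⊢ <;> tauto

lemma Fmem_ne {σ : Fin 2} {S : Set α} (h1 : Fmem Ω σ S) (h2 : Fmem Ω (1 - σ) S) :
    False := by
  rcases fin2_cases σ with h' | h' <;> subst h' <;> simp [Fmem] at h1 h2 <;> tauto

lemma exists_maximal_child {L S : Set α} {τ : Fin 2} (hS : S ⊆ L) (hF : Fmem Ω τ S) :
    ∃ M, S ⊆ M ∧ M ⊆ L ∧ Fmem Ω τ M ∧
      ∀ M', M ⊆ M' → M' ⊆ L → Fmem Ω τ M' → M' = M := by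
  set Fam : Set (Set α) := {T | S ⊆ T ∧ T ⊆ L ∧ Fmem Ω τ T} with hFam
  have hfin : Fam.Finite := Set.toFinite _
  have hne : Fam.Nonempty := ⟨S, subset_rfl, hS, hF⟩
  obtain ⟨M, hM, hmax⟩ := hfin.exists_maximal hne
  refine ⟨M, hM.1, hM.2.1, hM.2.2, fun M' hMM' hM'L hFM' => ?_⟩
  have : M' ∈ Fam := ⟨hM.1.trans hMM', hM'L, hFM'⟩
  exact le_antisymm (hmax this hMM') hMM'

/-- determinacy from the one-sided lemma -/
lemma D_of_Z {L : Set α} {σ : Fin 2}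
    (hZ : ∀ X, X ⊆ L → Subarena A X → WinSet A X (MullerPayoff Ω) (1 - σ) = ∅ →
      FullyWins A X (MullerPayoff Ω) σ) :
    ∀ X, X ⊆ L → Subarena A X → ∀ v ∈ X,
      WinsFrom A X (MullerPayoff Ω) σ v ∨ WinsFrom A X (MullerPayoff Ω) (1 - σ) v := by
  intro X hXL hX v hv
  by_cases hvW : WinsFrom A X (MullerPayoff Ω) (1 - σ) v
  · exact Or.inr hvW
  · left
    have hres := residual_facts (Ω := Ω) hX (1 - σ)
    have hempty := residual_win_empty (Ω := Ω) hX (1 - σ)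
    have hvY : v ∈ X \ WinSet A X (MullerPayoff Ω) (1 - σ) := ⟨hv, fun hc => hvW hc.2⟩
    have hfull := hZ _ (Set.diff_subset.trans hXL) hres.1 hempty
    exact lift_win hX Set.diff_subset hres.2 hvY (hfull v hvY)

/-- THE main induction (Zielonka) : if the opponent wins nowhere, we fully win. -/
theorem Zlem : ∀ (N : ℕ) (L : Set α) (σ : Fin 2), L.ncard ≤ N → Fmem Ω σ L →
    ∀ X, X ⊆ L → Subarena A X → WinSet A X (MullerPayoff Ω) (1 - σ) = ∅ →
      FullyWins A X (MullerPayoff Ω) σ := by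
  intro N
  induction N using Nat.strong_induction_on with
  | _ N IH =>
    intro L σ hcard hL X hXL hX hempty
    set τ := 1 - σ with hτdef
    set Cset : Set (Set α) := {M | M ⊆ L ∧ Fmem Ω τ M ∧
      ∀ M', M ⊆ M' → M' ⊆ L → Fmem Ω τ M' → M' = M} with hCset
    set cl : List (Set α) := Cset.toFinite.toFinset.toList with hcl
    have hclmem : ∀ M ∈ cl, M ∈ Cset := by
      intro M hM
      rw [hcl, Finset.mem_toList, Set.Finite.mem_toFinset] at hM
      exact hM
    have hmemcl : ∀ M ∈ Cset, M ∈ cl := by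
      intro M hM
      rw [hcl, Finset.mem_toList, Set.Finite.mem_toFinset]
      exact hM
    by_cases hk : cl.length = 0
    · -- base case : no children, any legal strategy wins
      intro v hv
      refine ⟨fbStrat A X hX σ, ?_⟩
      intro ρ hρ _ _
      show winsP Ω σ ρ
      rw [winsP_iff_Fmem]
      by_contra hc
      have hFτ : Fmem Ω τ (InfOcc ρ) := by
        rw [hτdef]
        apply Fmem_of_not
        rwa [one_sub_one_sub]
      obtain ⟨M, _, hML, hFM, hmax⟩ :=
        exists_maximal_child ((infOcc_subset_of_play hρ).trans hXL) hFτ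
      have hMcl : M ∈ cl := hmemcl M ⟨hML, hFM, hmax⟩
      rw [List.eq_nil_of_length_eq_zero hk] at hMcl
      cases hMcl
    · -- main case
      have hkpos : 0 < cl.length := Nat.pos_of_ne_zero hk
      have hMi_mem : ∀ i : ℕ, zMi cl i ∈ Cset := by
        intro i
        have hlt : i % cl.length < cl.length := Nat.mod_lt _ hkpos
        rw [zMi, List.getD_eq_getElem _ _ hlt]
        exact hclmem _ (List.getElem_mem hlt)
      have hMiF : ∀ i, Fmem Ω τ (zMi cl i) := fun i => (hMi_mem i).2.1
      have hMicard : ∀ i, (zMi cl i).ncard < N := by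
        intro i
        have hss : zMi cl i ⊂ L := by
          refine ⟨(hMi_mem i).1, fun hLM => ?_⟩
          have : zMi cl i = L := Set.Subset.antisymm (hMi_mem i).1 hLM
          exact Fmem_ne hL (this ▸ hMiF i)
        have := Set.ncard_lt_ncard hss (Set.toFinite L)
        omega
      have hsub' : ∀ i : ℕ, Subarena A (zXMi A X σ cl i) :=
        fun i => (attr_compl_facts hX).1
      have htrap' : ∀ i : ℕ, TrapIn A X σ (zXMi A X σ cl i) :=
        fun i => (attr_compl_facts hX).2
      have hXMiX : ∀ i, zXMi A X σ cl i ⊆ X := fun i => Set.diff_subset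
      have hXMiMi : ∀ i, zXMi A X σ cl i ⊆ zMi cl i := by
        intro i u hu
        by_contra hc
        exact hu.2 (subset_attrU ⟨hu.1, hc⟩)
      have hwempty : ∀ i, WinSet A (zXMi A X σ cl i) (MullerPayoff Ω) τ = ∅ := by
        intro i
        by_contra hne
        obtain ⟨w, hwm, hww⟩ := Set.nonempty_iff_ne_empty.2 hne
        have htrap2 : TrapIn A X (1 - τ) (zXMi A X σ cl i) := by
          rw [hτdef, one_sub_one_sub]
          exact htrap' i
        have hlift := lift_win hX (hXMiX i) htrap2 hwm hww
        have : w ∈ WinSet A X (MullerPayoff Ω) τ := ⟨hXMiX i hwm, hlift⟩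
        rw [hempty] at this
        cases this
      have hfull : ∀ i, ∀ w ∈ zXMi A X σ cl i,
          WinsFrom A (zXMi A X σ cl i) (MullerPayoff Ω) σ w := by
        intro i w hw
        have hZchild := IH (zMi cl i).ncard (hMicard i) (zMi cl i) τ (le_refl _) (hMiF i)
        rcases D_of_Z hZchild (zXMi A X σ cl i) (hXMiMi i) (hsub' i) w hw with h | h
        · exfalso
          have hmem : w ∈ WinSet A (zXMi A X σ cl i) (MullerPayoff Ω) τ := ⟨hw, h⟩
          rw [hwempty i] at hmem
          cases hmem
        · rw [hτdef, one_sub_one_sub] at h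
          exact h
      -- sub-strategy moves and the attractor moves
      set wmove : ℕ → α → List α → α → α :=
        fun i u => (winStrat (hsub' i) Ω σ u).move with hwmove
      set am : ℕ → α → α := fun i w =>
        if h : ∃ u, (w, u) ∈ A.E ∧ u ∈ X ∧ u ∈ zAi A X σ cl i ∧
            lvl A X σ (zTi X cl i) u < lvl A X σ (zTi X cl i) w
        then h.choose else fb A X w with ham
      have ham_legal : ∀ i w, w ∈ X → (w, am i w) ∈ A.E ∧ am i w ∈ X := by
        intro i w hw
        rw [ham]
        dsimp only
        by_cases h : ∃ u, (w, u) ∈ A.E ∧ u ∈ X ∧ u ∈ zAi A X σ cl i ∧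
            lvl A X σ (zTi X cl i) u < lvl A X σ (zTi X cl i) w
        · rw [dif_pos h]
          exact ⟨h.choose_spec.1, h.choose_spec.2.1⟩
        · rw [dif_neg h]
          exact ⟨(fb_spec hX hw).2, (fb_spec hX hw).1⟩
      have ham_dec : ∀ i w, w ∈ X → w ∈ zAi A X σ cl i → w ∉ zTi X cl i → w ∈ A.P σ →
          am i w ∈ zAi A X σ cl i ∧
            lvl A X σ (zTi X cl i) (am i w) < lvl A X σ (zTi X cl i) w := by
        intro i w hw hA hT hP
        obtain ⟨u, he, huX, huA, hlvl⟩ := attr_step_own hA hT hP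
        have h : ∃ u, (w, u) ∈ A.E ∧ u ∈ X ∧ u ∈ zAi A X σ cl i ∧
            lvl A X σ (zTi X cl i) u < lvl A X σ (zTi X cl i) w :=
          ⟨u, he, huX, huA, hlvl⟩
        rw [ham]
        dsimp only
        rw [dif_pos h]
        exact ⟨h.choose_spec.2.2.1, h.choose_spec.2.2.2⟩
      -- the global strategy
      set sc : StrategyIn A X σ :=
        ⟨fun h w =>
          Option.elim (zstep A X σ cl (zmst A X σ cl h) w).2.1
            (am (zstep A X σ cl (zmst A X σ cl h) w).1 w)
            (fun m =>
              if w ∈ zXMi A X σ cl (zstep A X σ cl (zmst A X σ cl h) w).1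
              then wmove (zstep A X σ cl (zmst A X σ cl h) w).1 (h.getD m w) (h.drop m) w
              else fb A X w),
         by
          intro h w hw
          rcases hph : (zstep A X σ cl (zmst A X σ cl h) w).2.1 with _ | m
          · simp only [Option.elim_none]
            exact ⟨(ham_legal _ w hw.1).1, (ham_legal _ w hw.1).2⟩
          · simp only [Option.elim_some]
            by_cases hg : w ∈ zXMi A X σ cl (zstep A X σ cl (zmst A X σ cl h) w).1
            · rw [if_pos hg, hwmove]
              have := (winStrat (hsub' _) Ω σ (h.getD m w)).legal (h.drop m) w ⟨hg, hw.2⟩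
              exact ⟨this.1, hXMiX _ this.2⟩
            · rw [if_neg hg]
              exact ⟨(fb_spec hX hw.1).2, (fb_spec hX hw.1).1⟩⟩ with hsc
      intro v hv
      refine ⟨sc, ?_⟩
      intro ρ hρ h0 hcons
      show winsP Ω σ ρ
      have hconsS : ∀ t, ρ t ∈ A.P σ → ρ (t + 1) =
          Option.elim (zS A X σ cl ρ t).2.1 (am (zS A X σ cl ρ t).1 (ρ t))
            (fun m =>
              if ρ t ∈ zXMi A X σ cl (zS A X σ cl ρ t).1
              then wmove (zS A X σ cl ρ t).1
                ((List.ofFn fun j : Fin t => ρ j).getD m (ρ t))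
                ((List.ofFn fun j : Fin t => ρ j).drop m) (ρ t)
              else fb A X (ρ t)) := by
        intro t hP
        have hh := hcons t hP
        rw [hsc] at hh
        dsimp only at hh
        rw [zmst_ofFn] at hh
        exact hh
      by_cases hub : ∀ B, ∃ t, B ≤ (zS A X σ cl ρ t).1
      · -- index unbounded: the play leaves every child infinitely often
        rw [winsP_iff_Fmem]
        by_contra hc
        have hFτ : Fmem Ω τ (InfOcc ρ) := by
          rw [hτdef]
          apply Fmem_of_not
          rwa [one_sub_one_sub]
        obtain ⟨M, hIM, hML, hFM, hmax⟩ :=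
          exists_maximal_child ((infOcc_subset_of_play hρ).trans hXL) hFτ
        have hMcl : M ∈ cl := hmemcl M ⟨hML, hFM, hmax⟩
        obtain ⟨j, hj, hEq⟩ := List.getElem_of_mem hMcl
        have hfreq : ∀ B, ∃ t ≥ B, ρ t ∈ X \ M := by
          intro B
          obtain ⟨t, ht, hmem⟩ := zS_freq ρ hub j B hj
          rw [List.getD_eq_getElem _ _ hj, hEq] at hmem
          exact ⟨t, ht, hmem⟩
        obtain ⟨wv, hwv, hwInf⟩ := exists_infOcc_of_frequently hfreq
        exact hwv.2 (hIM hwInf)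
      · -- index eventually constant
        obtain ⟨N0, hidx'⟩ := zS_const ρ hub
        set i8 := (zS A X σ cl ρ N0).1 with hi8
        have hidx : ∀ t, N0 ≤ t → (zS A X σ cl ρ t).1 = i8 := hidx'
        have hTi : ∀ t, N0 < t → ρ t ∉ zTi X cl i8 := by
          intro t ht hmem
          have hstep : zS A X σ cl ρ t = zstep A X σ cl (zS A X σ cl ρ (t - 1)) (ρ t) := by
            rw [show t = (t - 1) + 1 by omega, zS_succ,
              show t - 1 + 1 - 1 = t - 1 by omega]
          rcases zstep_index_cases (A := A) (X := X) (σ := σ) (cl := cl)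
            (zS A X σ cl ρ (t - 1)) (ρ t) with ⟨h1, _⟩ | ⟨_, h2⟩
          · rw [← hstep] at h1
            have e1 := hidx t (by omega)
            have e2 := hidx (t - 1) (by omega)
            omega
          · exact h2 (by rwa [hidx (t - 1) (by omega)])
        have hAi : ∀ t, N0 < t → ρ t ∉ zAi A X σ cl i8 := by
          intro t ht hmem
          set ρ' : ℕ → α := fun q => ρ (q + t) with hρ'
          have hplay' : IsPlayIn A X ρ' := by
            intro q
            refine ⟨(hρ (q + t)).1, ?_⟩
            show (ρ (q + t), ρ (q + 1 + t)) ∈ A.E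
            rw [show q + 1 + t = q + t + 1 by omega]
            exact (hρ (q + t)).2
          have hmove : ∀ q, ρ' q ∈ attrU A X σ (zTi X cl i8) → ρ' q ∉ zTi X cl i8 →
              ρ' q ∈ A.P σ → ρ' (q + 1) ∈ attrU A X σ (zTi X cl i8) ∧
                lvl A X σ (zTi X cl i8) (ρ' (q + 1)) < lvl A X σ (zTi X cl i8) (ρ' q) := by
            intro q hA hT hP
            have hxmi : ρ (q + t) ∉ zXMi A X σ cl i8 := fun hx => hx.2 hA
            have hph : (zS A X σ cl ρ (q + t)).2.1 = none := by
              rw [(zS_invariant (A := A) (X := X) (σ := σ) (cl := cl) ρ (q + t)).2.1,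
                hidx (q + t) (by omega)]
              exact hxmi
            have heq := hconsS (q + t) hP
            rw [hph] at heq
            simp only [Option.elim_none] at heq
            rw [hidx (q + t) (by omega)] at heq
            have hd := ham_dec i8 (ρ (q + t)) (hρ (q + t)).1 hA hT hP
            constructor
            · show ρ (q + 1 + t) ∈ _
              rw [show q + 1 + t = q + t + 1 by omega, heq]
              exact hd.1
            · show lvl A X σ (zTi X cl i8) (ρ (q + 1 + t)) < _
              rw [show q + 1 + t = q + t + 1 by omega, heq]
              exact hd.2
          have hstart : ρ' 0 ∈ attrU A X σ (zTi X cl i8) := by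
            show ρ (0 + t) ∈ _
            rw [Nat.zero_add]
            exact hmem
          obtain ⟨t', _, hT'⟩ := attr_force hplay' hX.1 hmove 0 hstart
          exact hTi (t' + t) (by omega) hT'
        have hXMit : ∀ t, N0 < t → ρ t ∈ zXMi A X σ cl i8 :=
          fun t ht => ⟨(hρ t).1, hAi t ht⟩
        have hphsome : ∃ m, (zS A X σ cl ρ (N0 + 1)).2.1 = some m := by
          rcases hv' : (zS A X σ cl ρ (N0 + 1)).2.1 with _ | m
          · exfalso
            have hni := (zS_invariant (A := A) (X := X) (σ := σ) (cl := cl)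
              ρ (N0 + 1)).2.1.1 hv'
            rw [hidx (N0 + 1) (by omega)] at hni
            exact hni (hXMit (N0 + 1) (by omega))
          · exact ⟨m, rfl⟩
        obtain ⟨m, hm⟩ := hphsome
        have hpers : ∀ t, N0 + 1 ≤ t →
            (zS A X σ cl ρ t).2.1 = some m ∧ (zS A X σ cl ρ t).1 = i8 := by
          intro t
          induction t with
          | zero => intro ht; exact absurd ht (by omega)
          | succ t ih =>
            intro ht
            rcases Nat.lt_or_ge t (N0 + 1) with h' | h'
            · have hteq : t = N0 := by omega
              subst hteq
              exact ⟨hm, hidx (t + 1) (by omega)⟩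
            · have ihh := ih h'
              have h1 : ρ (t + 1) ∉ zTi X cl ((zS A X σ cl ρ t).1) := by
                rw [ihh.2]
                exact hTi (t + 1) (by omega)
              have h2 : ρ (t + 1) ∈ zXMi A X σ cl ((zS A X σ cl ρ t).1) := by
                rw [ihh.2]
                exact hXMit (t + 1) (by omega)
              constructor
              · rw [zS_succ]
                simp [zstep, h1, h2, ihh.1]
              · rw [zS_succ]
                rcases zstep_index_cases (A := A) (X := X) (σ := σ) (cl := cl)
                  (zS A X σ cl ρ t) (ρ (t + 1)) with ⟨_, hT'⟩ | ⟨hi2, _⟩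
                · exact absurd hT' h1
                · rw [hi2, ihh.2]
        have hsegall : ∀ t, m ≤ t → ρ t ∈ zXMi A X σ cl i8 ∧
            (zS A X σ cl ρ t).2.1 = some m ∧ (zS A X σ cl ρ t).1 = i8 := by
          intro t ht
          rcases le_or_gt t (N0 + 1) with h' | h'
          · have hseg := zS_seg ρ (N0 + 1) m hm t ht h'
            have hidx1 : (zS A X σ cl ρ (N0 + 1)).1 = i8 := hidx (N0 + 1) (by omega)
            rw [hidx1] at hseg
            exact ⟨hseg.2.2, hseg.2.1, hseg.1⟩
          · exact ⟨hXMit t (by omega), (hpers t (by omega)).1, (hpers t (by omega)).2⟩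
        set ρ2 : ℕ → α := fun q => ρ (q + m) with hρ2
        have hplay2 : IsPlayIn A (zXMi A X σ cl i8) ρ2 := by
          intro q
          refine ⟨(hsegall (q + m) (by omega)).1, ?_⟩
          show (ρ (q + m), ρ (q + 1 + m)) ∈ A.E
          rw [show q + 1 + m = q + m + 1 by omega]
          exact (hρ (q + m)).2
        have h02 : ρ2 0 = ρ m := by
          show ρ (0 + m) = ρ m
          rw [Nat.zero_add]
        have hwm : WinsFrom A (zXMi A X σ cl i8) (MullerPayoff Ω) σ (ρ m) :=
          hfull i8 (ρ m) (hsegall m (le_refl _)).1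
        have hcons2 : ConsistentIn (winStrat (hsub' i8) Ω σ (ρ m)) ρ2 := by
          intro q hP
          have habs := hconsS (q + m) hP
          rw [(hsegall (q + m) (by omega)).2.1] at habs
          simp only [Option.elim_some] at habs
          rw [(hsegall (q + m) (by omega)).2.2] at habs
          rw [if_pos (hsegall (q + m) (by omega)).1] at habs
          have hgd : (List.ofFn fun j : Fin (q + m) => ρ j).getD m (ρ (q + m)) = ρ m := by
            rcases Nat.eq_zero_or_pos q with rfl | hq
            · rw [List.getD_eq_default _ _ (by simp)]
              show ρ (0 + m) = ρ m
              rw [Nat.zero_add]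
            · rw [List.getD_eq_getElem _ _ (by simp; omega), List.getElem_ofFn]
          have hdrop : (List.ofFn fun j : Fin (q + m) => ρ j).drop m =
              List.ofFn fun j : Fin q => ρ2 j := by
            rw [ofFn_drop ρ (q + m) m (by omega), show q + m - m = q by omega]
            congr 1
            funext j
            show ρ (m + j) = ρ (j + m)
            congr 1
            omega
          rw [hgd, hdrop] at habs
          show ρ (q + 1 + m) = _
          rw [show q + 1 + m = q + m + 1 by omega, habs, hwmove]
        have hwin2 := winStrat_spec (hsub' i8) hwm ρ2 hplay2 h02 hcons2
        exact (winsP_shift ρ m).1 hwin2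

end MG7

section MG8

open Classical

variable {α : Type} [Fintype α] {A : Arena α} {Ω : Set (Set α)}

/-- an owned winning vertex has a successor in the winning set -/
lemma exists_succ_in_winset {X : Set α} (hX : Subarena A X) {π : Fin 2} {v : α}
    (hvX : v ∈ X) (hvW : WinsFrom A X (MullerPayoff Ω) π v) (hP : v ∈ A.P π) :
    ∃ u, (v, u) ∈ A.E ∧ u ∈ WinSet A X (MullerPayoff Ω) π := by
  obtain ⟨s, hs⟩ := hvW
  set F : List α → α → α :=
    fun l w => if w ∈ X ∩ A.P π then s.move l w else fb A X w with hF
  have hFleg : ∀ l w, w ∈ X → F l w ∈ X ∧ (w, F l w) ∈ A.E := by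
    intro l w hw
    rw [hF]; dsimp only
    by_cases hp : w ∈ X ∩ A.P π
    · rw [if_pos hp]
      exact ⟨(s.legal l w hp).2, (s.legal l w hp).1⟩
    · rw [if_neg hp]
      exact ⟨(fb_spec hX hw).1, (fb_spec hX hw).2⟩
  obtain ⟨ρ, hinit, hplay, hrec⟩ := buildPlay X F hFleg [v] (by simp)
    (by
      intro i hi
      have : i = 0 := by simpa using hi
      subst this
      simpa using hvX)
    (by intro i hi; simp at hi)
  have h0 : ρ 0 = v := by simpa using hinit 0 (by simp)
  have hcons : ConsistentIn s ρ := by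
    intro i hPi
    rw [hrec i (by simp), hF]
    dsimp only
    rw [if_pos ⟨(hplay i).1, hPi⟩]
  have hwin := stay s hs hplay h0 hcons 1
  refine ⟨ρ 1, ?_, (hplay 1).1, hwin⟩
  have := (hplay 0).2
  rwa [h0] at this

/-- all successors of a non-owned winning vertex are in the winning set -/
lemma all_succ_in_winset {X : Set α} (hX : Subarena A X) {π : Fin 2} {v : α}
    (hvX : v ∈ X) (hvW : WinsFrom A X (MullerPayoff Ω) π v) (hnP : v ∉ A.P π) :
    ∀ u, (v, u) ∈ A.E → u ∈ X → u ∈ WinSet A X (MullerPayoff Ω) π := by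
  intro u he huX
  obtain ⟨s, hs⟩ := hvW
  set F : List α → α → α :=
    fun l w => if w ∈ X ∩ A.P π then s.move l w else fb A X w with hF
  have hFleg : ∀ l w, w ∈ X → F l w ∈ X ∧ (w, F l w) ∈ A.E := by
    intro l w hw
    rw [hF]; dsimp only
    by_cases hp : w ∈ X ∩ A.P π
    · rw [if_pos hp]
      exact ⟨(s.legal l w hp).2, (s.legal l w hp).1⟩
    · rw [if_neg hp]
      exact ⟨(fb_spec hX hw).1, (fb_spec hX hw).2⟩
  obtain ⟨ρ, hinit, hplay, hrec⟩ := buildPlay X F hFleg [v, u] (by simp)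
    (by
      intro i hi
      simp only [List.length_cons, List.length_nil] at hi
      rcases i with _ | _ | i
      · simpa using hvX
      · simpa using huX
      · omega)
    (by
      intro i hi
      simp only [List.length_cons, List.length_nil] at hi
      have hieq : i = 0 := by omega
      subst hieq
      simpa using he)
  have h0 : ρ 0 = v := by simpa using hinit 0 (by simp)
  have h1 : ρ 1 = u := by simpa using hinit 1 (by simp)
  have hcons : ConsistentIn s ρ := by
    intro i hPi
    rcases Nat.eq_zero_or_pos i with rfl | hi
    · rw [h0] at hPi
      exact absurd hPi hnP
    · rw [hrec i (by simp; omega), hF]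
      dsimp only
      rw [if_pos ⟨(hplay i).1, hPi⟩]
  have hwin := stay s hs hplay h0 hcons 1
  rw [h1] at hwin
  exact ⟨huX, hwin⟩

/-- the winning set of a subarena is itself fully won -/
lemma winset_fullywins {X : Set α} (hX : Subarena A X) (π : Fin 2)
    (hWsub : Subarena A (WinSet A X (MullerPayoff Ω) π)) :
    FullyWins A (WinSet A X (MullerPayoff Ω) π) (MullerPayoff Ω) π := by
  set W := WinSet A X (MullerPayoff Ω) π with hW
  intro v hv
  obtain ⟨hvX, s, hs⟩ := hv
  set s2 : StrategyIn A W π :=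
    ⟨fun h w => if s.move h w ∈ W ∧ (w, s.move h w) ∈ A.E then s.move h w
      else fb A W w,
     by
      intro h w hw
      by_cases hcnd : s.move h w ∈ W ∧ (w, s.move h w) ∈ A.E
      · rw [if_pos hcnd]
        exact ⟨hcnd.2, hcnd.1⟩
      · rw [if_neg hcnd]
        exact ⟨(fb_spec hWsub hw.1).2, (fb_spec hWsub hw.1).1⟩⟩ with hs2
  refine ⟨s2, ?_⟩
  intro ρ hρ h0 hcons
  show winsP Ω π ρ
  set F : List α → α → α :=
    fun l w => if w ∈ X ∩ A.P π then s.move l w else fb A X w with hF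
  have hFleg : ∀ l w, w ∈ X → F l w ∈ X ∧ (w, F l w) ∈ A.E := by
    intro l w hw
    rw [hF]; dsimp only
    by_cases hp : w ∈ X ∩ A.P π
    · rw [if_pos hp]
      exact ⟨(s.legal l w hp).2, (s.legal l w hp).1⟩
    · rw [if_neg hp]
      exact ⟨(fb_spec hX hw).1, (fb_spec hX hw).2⟩
  -- the play follows `s`
  have hQ : ∀ n, ρ n ∈ A.P π →
      ρ (n + 1) = s.move (List.ofFn fun j : Fin n => ρ j) (ρ n) := by
    intro n
    induction n using Nat.strong_induction_on with
    | _ n IH2 =>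
      intro hPn
      obtain ⟨ρh, hinit, hplay, hrec⟩ := buildPlay X F hFleg
        (List.ofFn (fun j : Fin (n + 1) => ρ j))
        (by simp)
        (by
          intro i hi
          simp only [List.getElem_ofFn]
          exact (hρ i).1.1)
        (by
          intro i hi
          simp only [List.getElem_ofFn]
          exact (hρ i).2)
      have hplen : (List.ofFn (fun j : Fin (n + 1) => ρ j)).length = n + 1 := by simp
      have hagree : ∀ i, i ≤ n → ρh i = ρ i := by
        intro i hi
        have := hinit i (by rw [hplen]; omega)
        simp only [List.getElem_ofFn] at this
        exact this
      have hconsh : ConsistentIn s ρh := by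
        intro i hPi
        rcases Nat.lt_or_ge i n with hi | hi
        · have hPi' : ρ i ∈ A.P π := by rwa [hagree i (by omega)] at hPi
          rw [hagree (i + 1) (by omega), hagree i (by omega)]
          rw [IH2 i hi hPi']
          congr 1
          apply List.ext_getElem (by simp)
          intro q h1 h2
          simp only [List.getElem_ofFn]
          exact (hagree q (by simp at h1; omega)).symm
        · rw [hrec i (by rw [hplen]; omega), hF]
          dsimp only
          rw [if_pos ⟨(hplay i).1, hPi⟩]
      have h0h : ρh 0 = v := by
        rw [hagree 0 (by omega), h0]
      have hwin := stay s hs hplay h0h hconsh (n + 1)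
      have hmoveh : ρh (n + 1) = s.move (List.ofFn fun j : Fin n => ρh j) (ρh n) := by
        rw [hrec n (by rw [hplen]), hF]
        dsimp only
        rw [if_pos ⟨(hplay n).1, by rwa [hagree n (le_refl _)]⟩]
      have hhist : (List.ofFn fun j : Fin n => ρh j) = List.ofFn fun j : Fin n => ρ j := by
        apply List.ext_getElem (by simp)
        intro q h1 h2
        simp only [List.getElem_ofFn]
        exact hagree q (by simp at h1; omega)
      have hsmW : s.move (List.ofFn fun j : Fin n => ρ j) (ρ n) ∈ W ∧
          (ρ n, s.move (List.ofFn fun j : Fin n => ρ j) (ρ n)) ∈ A.E := by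
        have e1 : ρh (n + 1) = s.move (List.ofFn fun j : Fin n => ρ j) (ρ n) := by
          rw [hmoveh, hhist, hagree n (le_refl _)]
        constructor
        · rw [← e1]
          exact ⟨(hplay (n + 1)).1, hwin⟩
        · have := (hplay n).2
          rw [hagree n (le_refl _)] at this
          rwa [e1] at this
      have := hcons n hPn
      rw [hs2] at this
      dsimp only at this
      rw [if_pos hsmW] at this
      exact this
  have hplayX : IsPlayIn A X ρ := fun i => ⟨(hρ i).1.1, (hρ i).2⟩
  exact hs ρ hplayX h0 hQ

/-- determinacy of the Muller game on any subarena -/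
lemma determinacy {X : Set α} (hX : Subarena A X) :
    ∀ v ∈ X, WinsFrom A X (MullerPayoff Ω) 0 v ∨ WinsFrom A X (MullerPayoff Ω) 1 v := by
  intro v hv
  by_cases hΩ : (Set.univ : Set α) ∈ Ω
  · have hF : Fmem Ω 0 Set.univ := by simp [Fmem, hΩ]
    have hZ := Zlem (A := A) (Ω := Ω) (Set.univ : Set α).ncard Set.univ 0 (le_refl _) hF
    have hD := D_of_Z hZ X (Set.subset_univ X) hX v hv
    rcases hD with h | h
    · exact Or.inl h
    · right
      rwa [show (1 : Fin 2) - 0 = 1 by decide] at h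
  · have hF : Fmem Ω 1 Set.univ := by simp [Fmem, hΩ]
    have hZ := Zlem (A := A) (Ω := Ω) (Set.univ : Set α).ncard Set.univ 1 (le_refl _) hF
    have hD := D_of_Z hZ X (Set.subset_univ X) hX v hv
    rcases hD with h | h
    · exact Or.inr h
    · left
      rwa [show (1 : Fin 2) - 1 = 0 by decide] at h

end MG8

/-- Lemma 4.10, second part: if some nonempty subarena of `A`
that is a 1-trap is fully won by Player 0, then the union `S_max` of all such
sets is a subarena that is a 1-trap, Player 0 fully wins `G(S_max)`,
`Win_0(G) = S_max`, and `Win_1(G) = V ∖ S_max`. -/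
theorem stmt9 (A : Arena α) (Ω : Set (Set α))
    (h : ∃ X : Set α, X.Nonempty ∧ Subarena A X ∧ TrapIn A A.V 1 X ∧
      FullyWins A X (MullerPayoff Ω) 0)
    (Smax : Set α)
    (hS : Smax = ⋃₀ {X : Set α | X.Nonempty ∧ Subarena A X ∧ TrapIn A A.V 1 X ∧
      FullyWins A X (MullerPayoff Ω) 0}) :
    Subarena A Smax ∧ TrapIn A A.V 1 Smax ∧
      FullyWins A Smax (MullerPayoff Ω) 0 ∧
      WinSet A A.V (MullerPayoff Ω) 0 = Smax ∧
      WinSet A A.V (MullerPayoff Ω) 1 = A.V \ Smax := by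
  classical
  set Fam : Set (Set α) := {X : Set α | X.Nonempty ∧ Subarena A X ∧
    TrapIn A A.V 1 X ∧ FullyWins A X (MullerPayoff Ω) 0} with hFam
  have hsub : ∀ X ∈ Fam, X ⊆ Smax := by
    intro X hXf
    rw [hS]
    exact Set.subset_sUnion_of_mem hXf
  have hSV : Smax ⊆ A.V := by
    rw [hS]
    rintro v ⟨X, hXf, hvX⟩
    exact hXf.2.1.1 hvX
  have e10 : (1 : Fin 2) - 1 = 0 := by decide
  have e01 : (1 : Fin 2) - 0 = 1 := by decide
  -- 1. Subarena
  have hSm_sub : Subarena A Smax := by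
    refine ⟨hSV, ?_⟩
    intro v hv
    rw [hS] at hv
    obtain ⟨X, hXf, hvX⟩ := hv
    obtain ⟨u, huX, he⟩ := hXf.2.1.2 v hvX
    exact ⟨u, hsub X hXf huX, he⟩
  -- 2. Trap
  have hSm_trap : TrapIn A A.V 1 Smax := by
    refine ⟨hSV, ?_, ?_⟩
    · rintro v ⟨hvS, hvP⟩
      rw [hS] at hvS
      obtain ⟨X, hXf, hvX⟩ := hvS
      obtain ⟨u, huX, he⟩ := hXf.2.2.1.2.1 v ⟨hvX, hvP⟩
      exact ⟨u, hsub X hXf huX, he⟩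
    · rintro v ⟨hvS, hvP⟩ u he huV
      rw [hS] at hvS
      obtain ⟨X, hXf, hvX⟩ := hvS
      exact hsub X hXf (hXf.2.2.1.2.2 v ⟨hvX, hvP⟩ u he huV)
  -- 3. FullyWins
  have hSm_full : FullyWins A Smax (MullerPayoff Ω) 0 := by
    intro v hv
    have hv' := hv
    rw [hS] at hv'
    obtain ⟨X, hXf, hvX⟩ := hv'
    have htrap : TrapIn A Smax (1 - 0) X := by
      rw [e01]
      exact ⟨hsub X hXf, hXf.2.2.1.2.1,
        fun w hw u he hu => hXf.2.2.1.2.2 w hw u he (hSV hu)⟩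
    exact lift_win hSm_sub (hsub X hXf) htrap hvX (hXf.2.2.2 v hvX)
  set W0 := WinSet A A.V (MullerPayoff Ω) 0 with hW0
  have hVsub : Subarena A A.V := subarena_V
  have hSmW0 : Smax ⊆ W0 := by
    intro v hv
    have htrap : TrapIn A A.V (1 - 0) Smax := by
      rw [e01]
      exact hSm_trap
    exact ⟨hSV hv, lift_win hVsub hSV htrap hv (hSm_full v hv)⟩
  obtain ⟨X0, hX0f⟩ := h
  have hX0Fam : X0 ∈ Fam := hX0f
  have hW0ne : W0.Nonempty := by
    obtain ⟨x, hx⟩ := hX0f.1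
    exact ⟨x, hSmW0 (hsub X0 hX0Fam hx)⟩
  have hW0V : W0 ⊆ A.V := fun v hv => hv.1
  have hW0sub : Subarena A W0 := by
    refine ⟨hW0V, ?_⟩
    intro v hv
    rcases mem_P_cases hv.1 0 with hP | hP
    · obtain ⟨u, he, hu⟩ := exists_succ_in_winset hVsub hv.1 hv.2 hP
      exact ⟨u, hu, he⟩
    · have hnP : v ∉ A.P 0 := fun hc => P_disj hc hP
      obtain ⟨u, he⟩ := A.succ v hv.1
      have huV : u ∈ A.V := (edge_mem he).2
      exact ⟨u, all_succ_in_winset hVsub hv.1 hv.2 hnP u he huV, he⟩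
  have hW0trap : TrapIn A A.V 1 W0 := by
    refine ⟨hW0V, ?_, ?_⟩
    · rintro v ⟨hvW, hvP⟩
      have hvP0 : v ∈ A.P 0 := by rwa [e10] at hvP
      obtain ⟨u, he, hu⟩ := exists_succ_in_winset hVsub hvW.1 hvW.2 hvP0
      exact ⟨u, hu, he⟩
    · rintro v ⟨hvW, hvP⟩ u he huV
      have hP10 : v ∈ A.P (1 - 0) := by
        rw [e01]
        exact hvP
      have hnP : v ∉ A.P 0 := fun hc => P_disj hc hP10
      exact all_succ_in_winset hVsub hvW.1 hvW.2 hnP u he huV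
  have hW0full : FullyWins A W0 (MullerPayoff Ω) 0 := winset_fullywins hVsub 0 hW0sub
  have hW0Fam : W0 ∈ Fam := ⟨hW0ne, hW0sub, hW0trap, hW0full⟩
  have hW0eq : W0 = Smax := Set.Subset.antisymm (hsub W0 hW0Fam) hSmW0
  have hdisj := win_disjoint (Ω := Ω) hVsub
  refine ⟨hSm_sub, hSm_trap, hSm_full, hW0eq, ?_⟩
  apply Set.Subset.antisymm
  · intro v hv
    refine ⟨hv.1, fun hvS => ?_⟩
    have hvW0 : v ∈ W0 := by
      rw [hW0eq]
      exact hvS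
    have hmem : v ∈ WinSet A A.V (MullerPayoff Ω) 0 ∩ WinSet A A.V (MullerPayoff Ω) 1 :=
      ⟨hvW0, hv⟩
    rw [hdisj] at hmem
    cases hmem
  · intro v hv
    rcases determinacy hVsub v hv.1 with h' | h'
    · exact absurd (hW0eq ▸ (⟨hv.1, h'⟩ : v ∈ W0)) hv.2
    · exact ⟨hv.1, h'⟩
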